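/- arXiv:1912.03352 — 5 statements merged into one kernel-verified Lean document; each statement's English description precedes it below -/
import Mathlib

section
/- For integers n ≥ 0 and m ≥ 1 and z ∈ ℂ, one has Σ_{k=0}^n C(n+m, k+m) z^k = ((n+m)!/((m-1)! n!)) ∫_0^1 (1-t)^{m-1} (1+zt)^n dt. -/
open MeasureTheory

lemma prod_shift (k m : ℕ) :
    Nat.factorial k * ∏ j ∈ Finset.range m, (k + 1 + j) = Nat.factorial (k + m) := by
  induction m with
  | zero => simp
  | succ m ih =>
    rw [Finset.prod_range_succ, ← mul_assoc, ih, ← Nat.add_assoc, Nat.factorial_succ]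
    ring_nf

lemma beta_nat (m : ℕ) (hm : 0 < m) (k : ℕ) :
    ∫ t in (0:ℝ)..1, ((1:ℂ) - t) ^ (m - 1) * (t : ℂ) ^ k
      = (Nat.factorial k * Nat.factorial (m - 1) : ℂ) / (Nat.factorial (k + m) : ℂ) := by
  have hre : 0 < Complex.re ((k : ℂ) + 1) := by
    simp only [Complex.add_re, Complex.natCast_re, Complex.one_re]
    positivity
  have h := Complex.betaIntegral_eval_nat_add_one_right hre (m - 1)
  rw [Complex.betaIntegral] at h
  have hm1 : (m - 1 : ℕ) + 1 = m := Nat.succ_pred_eq_of_pos hm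
  have hint : (∫ x in (0:ℝ)..1, (x : ℂ) ^ (((k:ℂ) + 1) - 1) *
      ((1 : ℂ) - x) ^ ((((m-1:ℕ) : ℂ) + 1) - 1))
      = ∫ t in (0:ℝ)..1, ((1:ℂ) - t) ^ (m - 1) * (t : ℂ) ^ k := by
    congr 1
    funext x
    rw [add_sub_cancel_right, add_sub_cancel_right, Complex.cpow_natCast,
      Complex.cpow_natCast, mul_comm]
  rw [hint] at h
  rw [h]
  have hp : ∏ j ∈ Finset.range (m - 1 + 1), ((k : ℂ) + 1 + j)
      = (Nat.factorial (k + m) : ℂ) / (Nat.factorial k : ℂ) := by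
    rw [hm1]
    have := prod_shift k m
    have hc : ((Nat.factorial k : ℂ)) * ∏ j ∈ Finset.range m, ((k : ℂ) + 1 + j)
        = (Nat.factorial (k + m) : ℂ) := by
      rw [← this]
      push_cast
      ring
    rw [eq_div_iff (Nat.cast_ne_zero.2 (Nat.factorial_ne_zero k) : (Nat.factorial k : ℂ) ≠ 0)]
    rw [mul_comm]
    exact hc
  rw [hp]
  have h1 : (Nat.factorial k : ℂ) ≠ 0 := Nat.cast_ne_zero.2 (Nat.factorial_ne_zero k)
  have h2 : (Nat.factorial (k + m) : ℂ) ≠ 0 := Nat.cast_ne_zero.2 (Nat.factorial_ne_zero _)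
  field_simp

theorem stmt3 (n m : ℕ) (hm : 0 < m) (z : ℂ) :
    ∑ k ∈ Finset.range (n + 1), ((n + m).choose (k + m) : ℂ) * z ^ k
      = ((Nat.factorial (n + m) : ℂ) /
          ((Nat.factorial (m - 1) : ℂ) * (Nat.factorial n : ℂ))) *
        ∫ t in (0:ℝ)..1, ((1 : ℂ) - (t : ℂ)) ^ (m - 1) * (1 + z * (t : ℂ)) ^ n := by
  have hexp : ∀ t : ℝ, ((1 : ℂ) - (t:ℂ)) ^ (m - 1) * (1 + z * t) ^ n
      = ∑ k ∈ Finset.range (n + 1),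
          ((n.choose k : ℂ) * z ^ k) * (((1:ℂ) - t) ^ (m - 1) * (t:ℂ) ^ k) := by
    intro t
    rw [add_comm (1 : ℂ), add_pow, Finset.mul_sum]
    refine Finset.sum_congr rfl fun k hk => ?_
    rw [mul_pow]
    ring
  have hI : (∫ t in (0:ℝ)..1, ((1 : ℂ) - (t : ℂ)) ^ (m - 1) * (1 + z * (t : ℂ)) ^ n)
      = ∑ k ∈ Finset.range (n + 1),
          ((n.choose k : ℂ) * z ^ k) *
            ((Nat.factorial k * Nat.factorial (m - 1) : ℂ) / (Nat.factorial (k + m) : ℂ)) := by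
    rw [intervalIntegral.integral_congr (g := fun t : ℝ => ∑ k ∈ Finset.range (n + 1),
          ((n.choose k : ℂ) * z ^ k) * (((1:ℂ) - t) ^ (m - 1) * (t:ℂ) ^ k))
        (fun t _ => hexp t)]
    rw [intervalIntegral.integral_finset_sum]
    · exact Finset.sum_congr rfl fun k _ => by
        rw [intervalIntegral.integral_const_mul, beta_nat m hm k]
    · intro k _
      apply Continuous.intervalIntegrable
      fun_prop
  rw [hI, Finset.mul_sum]
  refine Finset.sum_congr rfl fun k hk => ?_
  have hk' : k ≤ n := Nat.lt_succ_iff.mp (Finset.mem_range.mp hk)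
  have key : (n + m).choose (k + m) * ((k + m).factorial * (n - k).factorial) = (n + m).factorial := by
    have := Nat.choose_mul_factorial_mul_factorial (show k + m ≤ n + m by omega)
    rw [show n + m - (k + m) = n - k by omega] at this
    rw [← this]; ring
  have key2 : n.choose k * (k.factorial * (n - k).factorial) = n.factorial := by
    have := Nat.choose_mul_factorial_mul_factorial hk'
    rw [← this]; ring
  have h1 : (Nat.factorial (m-1) : ℂ) ≠ 0 := Nat.cast_ne_zero.2 (Nat.factorial_ne_zero _)
  have h2 : (Nat.factorial n : ℂ) ≠ 0 := Nat.cast_ne_zero.2 (Nat.factorial_ne_zero _)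
  have h3 : (Nat.factorial (k+m) : ℂ) ≠ 0 := Nat.cast_ne_zero.2 (Nat.factorial_ne_zero _)
  have h4 : ((n-k).factorial : ℂ) ≠ 0 := Nat.cast_ne_zero.2 (Nat.factorial_ne_zero _)
  have h5 : (Nat.factorial k : ℂ) ≠ 0 := Nat.cast_ne_zero.2 (Nat.factorial_ne_zero _)
  have e1 : ((n + m).choose (k + m) : ℂ)
      = ((n + m).factorial : ℂ) / (((k + m).factorial : ℂ) * ((n - k).factorial : ℂ)) := by
    rw [eq_div_iff (mul_ne_zero h3 h4)]
    exact_mod_cast congrArg (Nat.cast : ℕ → ℂ) key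
  have e2 : ((n.choose k : ℂ))
      = ((n.factorial : ℂ)) / (((k.factorial : ℂ)) * ((n - k).factorial : ℂ)) := by
    rw [eq_div_iff (mul_ne_zero h5 h4)]
    exact_mod_cast congrArg (Nat.cast : ℕ → ℂ) key2
  rw [e1, e2]
  field_simp
end

section
/- Uniformly on compact subsets of the region {w ∈ ℂ : |1-w²| < 1 and Re(w) < 0}, the integrals G_n(w) := ∫_w^1 (1-x²)^n dx satisfy (√n/√π)·G_n(w) → 1 as n → ∞. -/
open MeasureTheory Filter Real

/-- Contour integral of `f` along the straight segment from `a` to `b`. -/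
noncomputable def segInt (f : ℂ → ℂ) (a b : ℂ) : ℂ :=
  (b - a) * ∫ t in (0:ℝ)..1, f (a + (t : ℂ) * (b - a))

/-- `G n w = ∫_w^1 (1 - x²)^n dx`. -/
noncomputable def G (n : ℕ) (w : ℂ) : ℂ := segInt (fun x => (1 - x ^ 2) ^ n) w 1

private lemma my_div_mul_mul_cancel {a m p : ℂ} (hm : m ≠ 0) : a / m * (m * p) = a * p := by
  field_simp

/-- Complex antiderivative of `(1-x^2)^n`. -/
noncomputable def Fc (n : ℕ) (x : ℂ) : ℂ :=
  ∑ k ∈ Finset.range (n+1), ((n.choose k : ℂ) * (-1)^k / ((2*k+1 : ℕ) : ℂ)) * x^(2*k+1)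

lemma hasDerivAt_Fc (n : ℕ) (x : ℂ) : HasDerivAt (Fc n) ((1 - x^2)^n) x := by
  have h : HasDerivAt (Fc n)
      (∑ k ∈ Finset.range (n+1), (n.choose k : ℂ) * (-1)^k * x^(2*k)) x := by
    apply HasDerivAt.fun_sum
    intro k hk
    have h1 : HasDerivAt (fun y : ℂ => y^(2*k+1)) (((2*k+1 : ℕ) : ℂ) * x^(2*k)) x := by
      simpa using hasDerivAt_pow (2*k+1) x
    have h2 := h1.const_mul ((n.choose k : ℂ) * (-1)^k / ((2*k+1 : ℕ) : ℂ))
    have hne : ((2*k+1 : ℕ) : ℂ) ≠ 0 := Nat.cast_ne_zero.mpr (by omega)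
    rw [my_div_mul_mul_cancel hne] at h2
    exact h2
  convert h using 1
  rw [show (1 : ℂ) - x^2 = -x^2 + 1 by ring, add_pow]
  apply Finset.sum_congr rfl
  intro k hk
  rw [neg_pow, ← pow_mul]
  ring

/-- FTC for segment integrals of functions with a global antiderivative. -/
lemma segInt_eq_of_hasDerivAt (F f : ℂ → ℂ) (hF : ∀ x, HasDerivAt F (f x) x)
    (hf : Continuous f) (a b : ℂ) : segInt f a b = F b - F a := by
  have key : ∀ t : ℝ, HasDerivAt (fun s : ℝ => F (a + (s:ℂ)*(b-a)))
      ((b-a) * f (a + (t:ℂ)*(b-a))) t := by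
    intro t
    have inner : HasDerivAt (fun z : ℂ => a + z*(b-a)) (b-a) ((t:ℝ):ℂ) := by
      simpa using ((hasDerivAt_id ((t:ℝ):ℂ)).mul_const (b-a)).const_add a
    have h1 : HasDerivAt (fun z : ℂ => F (a + z*(b-a)))
        (f (a + (t:ℂ)*(b-a)) * (b-a)) ((t:ℝ):ℂ) :=
      HasDerivAt.comp _ (hF _) inner
    simpa [mul_comm] using h1.comp_ofReal
  have hInt : IntervalIntegrable (fun t : ℝ => (b-a) * f (a + (t:ℂ)*(b-a))) volume 0 1 := by
    apply Continuous.intervalIntegrable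
    fun_prop
  have h2 := intervalIntegral.integral_eq_sub_of_hasDerivAt (fun t _ => key t) hInt
  rw [intervalIntegral.integral_const_mul] at h2
  simp only [Complex.ofReal_one, Complex.ofReal_zero, one_mul, zero_mul, add_zero] at h2
  rw [segInt, h2]
  ring_nf

lemma segInt_FTC (n : ℕ) (a b : ℂ) :
    segInt (fun x => (1 - x ^ 2) ^ n) a b = Fc n b - Fc n a := by
  apply segInt_eq_of_hasDerivAt _ _ (hasDerivAt_Fc n) (by fun_prop)

noncomputable def J (n : ℕ) : ℝ := ∫ t in (0:ℝ)..1, (1 - t^2)^n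

lemma J_zero : J 0 = 1 := by simp [J]

lemma J_rec (n : ℕ) : (2*n+3 : ℝ) * J (n+1) = (2*n+2) * J n := by
  have key : ∀ t : ℝ, HasDerivAt (fun t : ℝ => t * (1-t^2)^(n+1))
      ((2*n+3)*(1-t^2)^(n+1) - (2*n+2)*(1-t^2)^n) t := by
    intro t
    have h1 : HasDerivAt (fun t : ℝ => 1 - t^2) (-(2*t)) t := by
      simpa using ((hasDerivAt_pow 2 t).const_sub 1)
    have h2 : HasDerivAt (fun t : ℝ => (1-t^2)^(n+1))
        ((n+1 : ℕ) * (1-t^2)^n * (-(2*t))) t := h1.pow (n+1)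
    have h3 := (hasDerivAt_id t).fun_mul h2
    simp only [id_eq] at h3
    refine h3.congr_deriv ?_
    push_cast
    ring
  have hInt : IntervalIntegrable
      (fun t : ℝ => (2*n+3)*(1-t^2)^(n+1) - (2*n+2)*(1-t^2)^n) volume 0 1 := by
    apply Continuous.intervalIntegrable; fun_prop
  have h2 := intervalIntegral.integral_eq_sub_of_hasDerivAt (fun t _ => key t) hInt
  have hI1 : IntervalIntegrable (fun t : ℝ => (2*(n:ℝ)+3)*(1-t^2)^(n+1)) volume 0 1 := by
    apply Continuous.intervalIntegrable; fun_prop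
  have hI2 : IntervalIntegrable (fun t : ℝ => (2*(n:ℝ)+2)*(1-t^2)^n) volume 0 1 := by
    apply Continuous.intervalIntegrable; fun_prop
  rw [intervalIntegral.integral_sub hI1 hI2, intervalIntegral.integral_const_mul,
    intervalIntegral.integral_const_mul] at h2
  simp at h2
  rw [J, J]
  linarith [h2]

lemma J_eq (n : ℕ) : J n = ∏ i ∈ Finset.range n, ((2*i+2)/(2*i+3) : ℝ) := by
  induction n with
  | zero => simpa using J_zero
  | succ n ih =>
    rw [Finset.prod_range_succ, ← ih]
    have h := J_rec n
    have hne : (2*(n:ℝ)+3) ≠ 0 := by positivity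
    field_simp
    linarith [h]

lemma J_nonneg (n : ℕ) : 0 ≤ J n := by
  rw [J_eq]; positivity

lemma W_eq (n : ℕ) : Real.Wallis.W n = (2*n+1) * (J n)^2 := by
  induction n with
  | zero => simp [Real.Wallis.W, J_zero]
  | succ n ih =>
    rw [Real.Wallis.W_succ, ih]
    have h1 : (2*(n:ℝ)+1) ≠ 0 := by positivity
    have h3 : (2*(n:ℝ)+3) ≠ 0 := by positivity
    have hrec : J (n+1) = (2*n+2)/(2*n+3) * J n := by
      have := J_rec n
      field_simp
      linarith
    rw [hrec]
    push_cast
    field_simp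
    ring

lemma sqrtn_J : Filter.Tendsto (fun n : ℕ => Real.sqrt n * J n) atTop (nhds (Real.sqrt π / 2)) := by
  have hW := Real.Wallis.tendsto_W_nhds_pi_div_two
  have hhalf : Filter.Tendsto (fun n : ℕ => (n : ℝ)/(2*n+1)) atTop (nhds (1/2)) := by
    have h1 : Filter.Tendsto (fun n : ℕ => (1:ℝ)/n) atTop (nhds 0) :=
      tendsto_one_div_atTop_nhds_zero_nat
    have h2 : Filter.Tendsto (fun n : ℕ => (2 + 1/(n:ℝ))⁻¹) atTop (nhds (2 + 0)⁻¹) :=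
      ((h1.const_add 2).inv₀ (by norm_num))
    rw [show ((2:ℝ)+0)⁻¹ = 1/2 by norm_num] at h2
    apply h2.congr'
    filter_upwards [Filter.eventually_ge_atTop 1] with n hn
    have hn' : (n:ℝ) ≠ 0 := Nat.cast_ne_zero.mpr (by omega)
    field_simp
  have hmul : Filter.Tendsto (fun n : ℕ => (n : ℝ)/(2*n+1) * Real.Wallis.W n) atTop
      (nhds (1/2 * (π/2))) := hhalf.mul hW
  have heq : ∀ n : ℕ, (n : ℝ)/(2*n+1) * Real.Wallis.W n = (n : ℝ) * (J n)^2 := by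
    intro n
    rw [W_eq]
    have h1 : (2*(n:ℝ)+1) ≠ 0 := by positivity
    field_simp
  simp only [heq] at hmul
  have hs := (Real.continuous_sqrt.tendsto (1/2 * (π/2))).comp hmul
  have : Real.sqrt (1/2 * (π/2)) = Real.sqrt π / 2 := by
    rw [show (1/2 * (π/2) : ℝ) = (Real.sqrt π / 2)^2 by
      rw [div_pow, Real.sq_sqrt Real.pi_pos.le]; ring]
    exact Real.sqrt_sq (by positivity)
  rw [this] at hs
  apply hs.congr
  intro n
  simp only [Function.comp_apply]
  rw [Real.sqrt_mul (Nat.cast_nonneg n), Real.sqrt_sq (J_nonneg n)]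

lemma Fc_zero (n : ℕ) : Fc n 0 = 0 := by
  simp [Fc]

lemma Fc_neg_one (n : ℕ) : Fc n (-1) = - Fc n 1 := by
  rw [Fc, Fc, ← Finset.sum_neg_distrib]
  apply Finset.sum_congr rfl
  intro k _
  have h : (-1 : ℂ)^(2*k+1) = -1 := by
    rw [pow_succ, pow_mul]; norm_num
  rw [h, one_pow]
  ring

lemma Fc_one (n : ℕ) : Fc n 1 = (J n : ℂ) := by
  have h := segInt_FTC n 0 1
  rw [Fc_zero, sub_zero] at h
  rw [← h, segInt]
  have : (∫ t in (0:ℝ)..1, (1 - ((0:ℂ) + (t:ℂ) * (1-0)) ^ 2) ^ n) = ((J n : ℝ) : ℂ) := by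
    rw [J, ← intervalIntegral.integral_ofReal]
    apply intervalIntegral.integral_congr
    intro t _
    push_cast
    ring
  rw [this]
  ring

lemma G_eq (n : ℕ) (w : ℂ) :
    G n w = 2 * (J n : ℂ) - segInt (fun x => (1 - x ^ 2) ^ n) (-1) w := by
  rw [G, segInt_FTC, segInt_FTC, Fc_neg_one, Fc_one]
  ring

/-- Pointwise bound along the segment from `-1` to `w`. -/
lemma abs_on_seg {w : ℂ} (hw : ‖1 - w^2‖ < 1) (hre : w.re < 0)
    {s : ℝ} (hs0 : 0 ≤ s) (hs1 : s ≤ 1) :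
    ‖1 - (-1 + (s:ℂ)*(w+1))^2‖ ≤ ‖1 - w^2‖ := by
  set c := ‖1 - w^2‖ with hc
  have hc0 : 0 ≤ c := norm_nonneg _
  have hfac : ‖1 - w^2‖ = ‖1 - w‖ * ‖1 + w‖ := by
    rw [show (1 : ℂ) - w^2 = (1 - w) * (1 + w) by ring, norm_mul]
  have hle : ‖1 + w‖ ≤ ‖1 - w‖ := by
    rw [Complex.norm_def, Complex.norm_def]
    apply Real.sqrt_le_sqrt
    simp only [Complex.normSq_apply, Complex.add_re, Complex.add_im, Complex.sub_re,
      Complex.sub_im, Complex.one_re, Complex.one_im]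
    nlinarith [hre]
  have hu2 : ‖w+1‖^2 ≤ c := by
    rw [hc, hfac, add_comm w 1]
    nlinarith [norm_nonneg (1 + w), norm_nonneg (1 - w)]
  have hdecomp : (1 : ℂ) - (-1 + (s:ℂ)*(w+1))^2
      = (s:ℂ) * ((1 - w^2) + (1 - (s:ℂ))*(w+1)^2) := by ring
  rw [hdecomp]
  calc ‖(s:ℂ) * ((1 - w^2) + (1 - (s:ℂ))*(w+1)^2)‖
      = s * ‖(1 - w^2) + (1 - (s:ℂ))*(w+1)^2‖ := by
        rw [norm_mul, Complex.norm_real, Real.norm_eq_abs, abs_of_nonneg hs0]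
    _ ≤ s * (c + (1-s) * ‖w+1‖^2) := by
        apply mul_le_mul_of_nonneg_left _ hs0
        refine (norm_add_le _ _).trans ?_
        have : ‖(1 - (s:ℂ))*(w+1)^2‖ = (1-s) * ‖w+1‖^2 := by
          rw [norm_mul, norm_pow, show (1 : ℂ) - (s:ℂ) = ((1 - s : ℝ) : ℂ) by push_cast; ring,
            Complex.norm_real, Real.norm_eq_abs, abs_of_nonneg (by linarith)]
        rw [this]
    _ ≤ s * (c + (1-s) * c) := by
        apply mul_le_mul_of_nonneg_left _ hs0
        have := mul_le_mul_of_nonneg_left hu2 (show (0:ℝ) ≤ 1 - s by linarith)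
        linarith
    _ ≤ c := by nlinarith [sq_nonneg (1-s)]

lemma segInt_bound (n : ℕ) {w : ℂ} (hw : ‖1 - w^2‖ < 1) (hre : w.re < 0) :
    ‖segInt (fun x => (1 - x ^ 2) ^ n) (-1) w‖
      ≤ ‖w+1‖ * (‖1 - w^2‖)^n := by
  rw [segInt, norm_mul]
  have h1 : ‖w - -1‖ = ‖w + 1‖ := by norm_num
  rw [h1]
  apply mul_le_mul_of_nonneg_left _ (norm_nonneg _)
  have := intervalIntegral.norm_integral_le_of_norm_le_const
    (C := (‖1 - w^2‖)^n)
    (f := fun t : ℝ => (1 - ((-1:ℂ) + (t:ℂ) * (w - -1)) ^ 2) ^ n)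
    (a := 0) (b := 1) ?_
  · simpa using this
  · intro t ht
    rw [Set.uIoc_of_le (by norm_num : (0:ℝ) ≤ 1)] at ht
    rw [norm_pow]
    apply pow_le_pow_left₀ (norm_nonneg _)
    have := abs_on_seg hw hre (le_of_lt ht.1) ht.2
    rw [sub_neg_eq_add]
    exact this

theorem stmt11 (K : Set ℂ) (hK : IsCompact K)
    (hKsub : K ⊆ {w : ℂ | ‖1 - w ^ 2‖ < 1 ∧ w.re < 0}) :
    TendstoUniformlyOn
      (fun (n : ℕ) (w : ℂ) => ((Real.sqrt n / Real.sqrt π : ℝ) : ℂ) * G n w)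
      (fun _ => 1) atTop K := by
  rcases K.eq_empty_or_nonempty with hKe | hne
  · subst hKe
    exact tendstoUniformlyOn_empty
  -- compact bounds
  have hg1 : Continuous fun w : ℂ => (1 : ℂ) - w^2 := by continuity
  have hg2 : Continuous fun w : ℂ => w + 1 := by continuity
  have hcont1 : Continuous fun w : ℂ => ‖1 - w^2‖ :=
    continuous_norm.comp hg1
  have hcont2 : Continuous fun w : ℂ => ‖w + 1‖ :=
    continuous_norm.comp hg2
  obtain ⟨w₀, hw₀K, hmax⟩ := hK.exists_isMaxOn hne hcont1.continuousOn
  obtain ⟨w₁, hw₁K, hM⟩ := hK.exists_isMaxOn hne hcont2.continuousOn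
  set c := ‖1 - w₀^2‖ with hcdef
  set M := ‖w₁+1‖ with hMdef
  have hc1 : c < 1 := (hKsub hw₀K).1
  have hc0 : 0 ≤ c := norm_nonneg _
  have hM0 : 0 ≤ M := norm_nonneg _
  -- scalar limits
  have hπ : (0:ℝ) < Real.sqrt π := Real.sqrt_pos.mpr Real.pi_pos
  have hA : Filter.Tendsto (fun n : ℕ => Real.sqrt n / Real.sqrt π * (2 * J n))
      atTop (nhds 1) := by
    have := sqrtn_J.const_mul (2 / Real.sqrt π)
    have heq : ∀ n : ℕ, 2 / Real.sqrt π * (Real.sqrt n * J n)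
        = Real.sqrt n / Real.sqrt π * (2 * J n) := fun n => by ring
    rw [show (2 / Real.sqrt π * (Real.sqrt π / 2)) = 1 by field_simp] at this
    exact this.congr heq
  have hB : Filter.Tendsto (fun n : ℕ => Real.sqrt n / Real.sqrt π * (M * c^n))
      atTop (nhds 0) := by
    have hsq : Filter.Tendsto (fun n : ℕ => Real.sqrt n * c^n) atTop (nhds 0) := by
      have h1 : Filter.Tendsto (fun n : ℕ => (n:ℝ) * (c^2)^n) atTop (nhds 0) :=
        tendsto_self_mul_const_pow_of_lt_one (by positivity) (by nlinarith)
      have h2 := (Real.continuous_sqrt.tendsto 0).comp h1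
      rw [Real.sqrt_zero] at h2
      apply h2.congr
      intro n
      simp only [Function.comp_apply]
      rw [Real.sqrt_mul (Nat.cast_nonneg n), show (c^2)^n = (c^n)^2 by ring,
        Real.sqrt_sq (pow_nonneg hc0 n)]
    have := hsq.const_mul (M / Real.sqrt π)
    rw [mul_zero] at this
    apply this.congr
    intro n; ring
  rw [Metric.tendstoUniformlyOn_iff]
  intro ε hε
  have h1 : ∀ᶠ n : ℕ in atTop, |Real.sqrt n / Real.sqrt π * (2 * J n) - 1| < ε/2 := by
    have := Metric.tendsto_nhds.mp hA (ε/2) (by positivity)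
    simpa [Real.dist_eq] using this
  have h2 : ∀ᶠ n : ℕ in atTop, |Real.sqrt n / Real.sqrt π * (M * c^n)| < ε/2 := by
    have := Metric.tendsto_nhds.mp hB (ε/2) (by positivity)
    simpa only [Real.dist_eq, sub_zero] using this
  filter_upwards [h1, h2] with n hn1 hn2
  intro w hwK
  obtain ⟨hw1, hw2⟩ := hKsub hwK
  set an : ℝ := Real.sqrt n / Real.sqrt π with han
  have han0 : 0 ≤ an := by positivity
  set R := segInt (fun x => (1 - x ^ 2) ^ n) (-1) w with hR
  have hGw : G n w = 2 * (J n : ℂ) - R := G_eq n w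
  have key : (an : ℂ) * G n w = ((an * (2 * J n) : ℝ) : ℂ) - (an : ℂ) * R := by
    rw [hGw]; push_cast; ring
  rw [dist_eq_norm, key]
  have hsplit : (1 : ℂ) - (((an * (2 * J n) : ℝ) : ℂ) - (an : ℂ) * R)
      = ((1 - an * (2 * J n) : ℝ) : ℂ) + (an : ℂ) * R := by push_cast; ring
  rw [hsplit]
  have hRb : ‖R‖ ≤ M * c^n := by
    refine (segInt_bound n hw1 hw2).trans ?_
    apply mul_le_mul (hM hwK) (pow_le_pow_left₀ (norm_nonneg _) (hmax hwK) n)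
      (pow_nonneg (norm_nonneg _) n) hM0
  calc ‖((1 - an * (2 * J n) : ℝ) : ℂ) + (an : ℂ) * R‖
      ≤ ‖((1 - an * (2 * J n) : ℝ) : ℂ)‖ + ‖(an : ℂ) * R‖ := norm_add_le _ _
    _ = |1 - an * (2 * J n)| + an * ‖R‖ := by
        rw [Complex.norm_real, Real.norm_eq_abs, norm_mul,
          Complex.norm_real, Real.norm_eq_abs, abs_of_nonneg han0]
    _ ≤ |1 - an * (2 * J n)| + an * (M * c^n) := by
        have := mul_le_mul_of_nonneg_left hRb han0
        linarith
    _ < ε/2 + ε/2 := by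
        apply add_lt_add
        · rw [abs_sub_comm] at hn1; exact hn1
        · calc an * (M * c^n) ≤ |an * (M * c^n)| := le_abs_self _
            _ < ε/2 := hn2
    _ = ε := by ring
end

section
/- Uniformly on compact subsets of E₁ := {z ∈ ℂ : |(z+1)²/(4z)| > 1 and |z| > 1}, the polynomials Q_{n,n}(z) = Σ_{k=0}^n C(2n, k+n) z^k satisfy Q_{n,n}(z)·z^n/(z+1)^{2n} → 1 as n → ∞. -/
open Filter

/-- Borwein–Chen–Dilcher polynomial `Q_{n,n}`. -/
noncomputable def Qnn (n : ℕ) (z : ℂ) : ℂ :=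
  ∑ k ∈ Finset.range (n + 1), ((2 * n).choose (k + n) : ℂ) * z ^ k

lemma Qnn_expand (n : ℕ) (z : ℂ) :
    (∑ i ∈ Finset.range n, ((2 * n).choose i : ℂ) * z ^ i) + Qnn n z * z ^ n
      = (z + 1) ^ (2 * n) := by
  rw [add_pow]
  simp only [one_pow, mul_one]
  have h2 : 2 * n + 1 = n + (n + 1) := by ring
  rw [h2, Finset.sum_range_add]
  congr 1
  · exact Finset.sum_congr rfl fun i _ => by ring
  · rw [Qnn, Finset.sum_mul]
    refine Finset.sum_congr rfl fun k _ => ?_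
    rw [Nat.add_comm n k, pow_add]
    ring

lemma Qnn_sum_bound (n : ℕ) (z : ℂ) (hz : 1 ≤ ‖z‖) :
    ‖∑ i ∈ Finset.range n, ((2 * n).choose i : ℂ) * z ^ i‖
      ≤ 4 ^ n * ‖z‖ ^ n := by
  calc ‖∑ i ∈ Finset.range n, ((2 * n).choose i : ℂ) * z ^ i‖
      ≤ ∑ i ∈ Finset.range n, ‖((2 * n).choose i : ℂ) * z ^ i‖ := by
        exact norm_sum_le _ _
    _ ≤ ∑ i ∈ Finset.range n, ((2 * n).choose i : ℝ) * ‖z‖ ^ n := by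
        refine Finset.sum_le_sum fun i hi => ?_
        rw [norm_mul, norm_pow, Complex.norm_natCast]
        exact mul_le_mul_of_nonneg_left
          (pow_le_pow_right₀ hz (le_of_lt (Finset.mem_range.mp hi))) (by positivity)
    _ = (∑ i ∈ Finset.range n, ((2 * n).choose i : ℝ)) * ‖z‖ ^ n := by
        rw [Finset.sum_mul]
    _ ≤ 4 ^ n * ‖z‖ ^ n := by
        refine mul_le_mul_of_nonneg_right ?_ (by positivity)
        have h1 : (∑ i ∈ Finset.range n, ((2 * n).choose i : ℝ))
            ≤ ∑ i ∈ Finset.range (2 * n + 1), ((2 * n).choose i : ℝ) := by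
          refine Finset.sum_le_sum_of_subset_of_nonneg
            (Finset.range_subset_range.mpr (by omega)) (fun _ _ _ => by positivity)
        have h2 : (∑ i ∈ Finset.range (2 * n + 1), ((2 * n).choose i : ℝ)) = 4 ^ n := by
          rw [← Nat.cast_sum, Nat.sum_range_choose]
          push_cast
          rw [pow_mul]
          norm_num
        linarith
    
theorem stmt12 (K : Set ℂ) (hK : IsCompact K)
    (hKsub : K ⊆ {z : ℂ | 1 < ‖(z + 1) ^ 2 / (4 * z)‖ ∧ 1 < ‖z‖}) :
    TendstoUniformlyOn
      (fun (n : ℕ) (z : ℂ) => Qnn n z * z ^ n / (z + 1) ^ (2 * n))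
      (fun _ => 1) atTop K := by
  rcases K.eq_empty_or_nonempty with hKe | hKne
  · subst hKe
    intro u hu
    filter_upwards with n z hz
    exact absurd hz (Set.notMem_empty z)
  -- basic facts on K
  have hne : ∀ z ∈ K, z + 1 ≠ 0 := by
    intro z hz h0
    have h1 := (hKsub hz).1
    rw [h0] at h1
    norm_num at h1
  -- the contraction factor
  set h : ℂ → ℝ := fun z => ‖4 * z / (z + 1) ^ 2‖ with hh
  have hcont : ContinuousOn h K := by
    apply continuous_norm.comp_continuousOn
    exact ContinuousOn.div (by fun_prop) (by fun_prop)
      (fun z hz => pow_ne_zero _ (hne z hz))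
  obtain ⟨z₀, hz₀K, hmax⟩ := hK.exists_isMaxOn hKne hcont
  set c : ℝ := h z₀ with hc
  have hc0 : 0 ≤ c := norm_nonneg _
  have hc1 : c < 1 := by
    have h1 := (hKsub hz₀K).1
    have hz0 : z₀ ≠ 0 := by
      intro h0
      have := (hKsub hz₀K).2
      rw [h0] at this
      norm_num at this
    have habs : ‖(z₀ + 1) ^ 2 / (4 * z₀)‖ * c = 1 := by
      rw [hc, hh, ← norm_mul]
      have h1ne : z₀ + 1 ≠ 0 := hne z₀ hz₀K
      have : (z₀ + 1) ^ 2 / (4 * z₀) * (4 * z₀ / (z₀ + 1) ^ 2) = 1 := by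
        field_simp
      rw [this, norm_one]
    nlinarith [norm_nonneg ((z₀ + 1) ^ 2 / (4 * z₀))]
  -- pointwise bound
  have hbound : ∀ n : ℕ, ∀ z ∈ K,
      ‖Qnn n z * z ^ n / (z + 1) ^ (2 * n) - 1‖ ≤ c ^ n := by
    intro n z hzK
    have hz1 : 1 < ‖z‖ := (hKsub hzK).2
    have hzne : z + 1 ≠ 0 := hne z hzK
    have hpne : (z + 1) ^ (2 * n) ≠ 0 := pow_ne_zero _ hzne
    have key : Qnn n z * z ^ n / (z + 1) ^ (2 * n) - 1
        = -(∑ i ∈ Finset.range n, ((2 * n).choose i : ℂ) * z ^ i) / (z + 1) ^ (2 * n) := by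
      rw [div_sub_one hpne]
      congr 1
      rw [← Qnn_expand n z]
      ring
    rw [key, norm_div, norm_neg, norm_pow]
    have habs : 0 < ‖z + 1‖ := norm_pos_iff.mpr hzne
    rw [div_le_iff₀ (by positivity)]
    calc ‖∑ i ∈ Finset.range n, ((2 * n).choose i : ℂ) * z ^ i‖
        ≤ 4 ^ n * ‖z‖ ^ n := Qnn_sum_bound n z hz1.le
      _ = h z ^ n * ‖z + 1‖ ^ (2 * n) := by
          have hane : (‖z + 1‖ ^ 2 : ℝ) ^ n ≠ 0 := by positivity
          rw [hh]
          simp only [norm_div, norm_mul, norm_pow, Complex.norm_ofNat, div_pow]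
          rw [pow_mul, div_mul_cancel₀ _ hane, mul_pow]
      _ ≤ c ^ n * ‖z + 1‖ ^ (2 * n) := by
          refine mul_le_mul_of_nonneg_right
            (pow_le_pow_left₀ (norm_nonneg _) (hmax hzK) n) (by positivity)
  -- conclude
  rw [Metric.tendstoUniformlyOn_iff]
  intro ε hε
  have htend : Tendsto (fun n : ℕ => c ^ n) atTop (nhds 0) :=
    tendsto_pow_atTop_nhds_zero_of_lt_one hc0 hc1
  filter_upwards [htend.eventually (gt_mem_nhds hε)] with n hn z hzK
  rw [dist_comm, Complex.dist_eq]
  exact lt_of_le_of_lt (hbound n z hzK) hn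
end

section
/- Uniformly on compact subsets of E₂ := {z ∈ ℂ : |(z+1)²/(4z)| < 1} ∪ {z ∈ ℂ : |(z+1)²/(4z)| > 1 and |z| < 1}, the polynomials Q_{n,n}(z) = Σ_{k=0}^n C(2n, k+n) z^k satisfy Q_{n,n}(z)·√(πn)·(1-z)/2^{2n} → 1 as n → ∞. -/
open Filter Real

/-! ### Auxiliary definitions -/

noncomputable def Dr (n k : ℕ) : ℝ :=
  ((2*n).choose (k+n) : ℝ) - ((2*n).choose (k+1+n) : ℝ)

noncomputable def cseq (n : ℕ) : ℝ := Real.sqrt (π * n) * n.centralBinom / 4 ^ n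

noncomputable def Eb (n : ℕ) (δ : ℝ) : ℝ :=
  |cseq n - 1| + (12*Real.sqrt π/δ) * (n.centralBinom / 4^n)
    + (2/δ) * (Real.sqrt (π*n) * (2*n) / 4^n) + Real.sqrt (π*n) / 4^n

/-! ### Central binomial asymptotics via Stirling -/

lemma cb_fact (n : ℕ) :
    (n.centralBinom : ℝ) * ((Nat.factorial n : ℝ) * (Nat.factorial n : ℝ)) = (Nat.factorial (2*n) : ℝ) := by
  have h : n.centralBinom * Nat.factorial n * Nat.factorial n = Nat.factorial (2*n) := by
    have := Nat.choose_mul_factorial_mul_factorial (show n ≤ 2*n by omega)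
    simpa [Nat.centralBinom, show 2*n - n = n by omega] using this
  rw [← mul_assoc]; exact_mod_cast congrArg (Nat.cast (R := ℝ)) h

lemma cseq_eq (n : ℕ) (hn : 1 ≤ n) :
    cseq n = Real.sqrt π * Stirling.stirlingSeq (2*n) / (Stirling.stirlingSeq n)^2 := by
  have hn0 : (0:ℝ) < n := by exact_mod_cast hn
  have hsq : (0:ℝ) < Real.sqrt (2*n) := Real.sqrt_pos.mpr (by positivity)
  have hf : (0:ℝ) < Nat.factorial n := by exact_mod_cast Nat.factorial_pos n
  have hexp : (0:ℝ) < Real.exp 1 := Real.exp_pos 1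
  have h4 : Real.sqrt (2*(2*(n:ℝ))) = 2 * Real.sqrt n := by
    rw [show 2*(2*(n:ℝ)) = 4 * n by ring, Real.sqrt_mul (by norm_num),
      show (4:ℝ) = 2^2 by norm_num, Real.sqrt_sq (by norm_num)]
  have hpn : Real.sqrt (π * n) = Real.sqrt π * Real.sqrt n := Real.sqrt_mul pi_pos.le _
  have h2e : (2*(n:ℝ)) ^ (2*n) = 4 ^ n * ((n:ℝ) ^ n)^2 := by
    rw [mul_pow, show (2:ℝ)^(2*n) = 4^n by rw [pow_mul]; norm_num, ← pow_mul, mul_comm 2 n, pow_mul]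
  have he2 : Real.exp 1 ^ (2*n) = (Real.exp 1 ^ n)^2 := by rw [← pow_mul, mul_comm]
  have hsn : (0:ℝ) < Real.sqrt n := Real.sqrt_pos.mpr hn0
  unfold cseq Stirling.stirlingSeq
  push_cast
  rw [hpn, ← cb_fact n, div_pow, div_pow, h2e, he2]
  field_simp
  have a1 : Real.sqrt ((2:ℝ)^2*n) = 2*Real.sqrt n := by rw [show (2:ℝ)^2*n = 2*(2*n) by ring, h4]
  have a2 : Real.sqrt (2*(n:ℝ))^2 = 2*(n:ℝ) := Real.sq_sqrt (by positivity)
  have a3 : Real.exp 1 ^ n * ((n:ℝ)/Real.exp 1)^n = (n:ℝ)^n := by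
    rw [div_pow]; field_simp
  have a4 := Real.mul_self_sqrt hn0.le
  rw [a1, a2]
  linear_combination (2*(n.centralBinom:ℝ)*((n:ℝ)^n)^2) * a4
    - (2*(n.centralBinom:ℝ)*n*(Real.exp 1 ^ n * ((n:ℝ)/Real.exp 1)^n + (n:ℝ)^n)) * a3

lemma stirling2n : Tendsto (fun n : ℕ => Stirling.stirlingSeq (2*n)) atTop (nhds (Real.sqrt π)) :=
  Stirling.tendsto_stirlingSeq_sqrt_pi.comp
    (Filter.tendsto_atTop_atTop.mpr (fun b => ⟨b, fun a ha => by omega⟩))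

lemma cseq_tendsto : Tendsto cseq atTop (nhds 1) := by
  have h : Tendsto (fun n : ℕ => Real.sqrt π * Stirling.stirlingSeq (2*n) / (Stirling.stirlingSeq n)^2)
      atTop (nhds (Real.sqrt π * Real.sqrt π / (Real.sqrt π)^2)) :=
    (tendsto_const_nhds.mul stirling2n).div
      (Stirling.tendsto_stirlingSeq_sqrt_pi.pow 2)
      (by positivity)
  have heq : Real.sqrt π * Real.sqrt π / (Real.sqrt π)^2 = 1 := by
    have : (0:ℝ) < Real.sqrt π := Real.sqrt_pos.mpr pi_pos
    rw [← sq]; field_simp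
  rw [heq] at h
  apply h.congr'
  filter_upwards [eventually_ge_atTop 1] with n hn
  exact (cseq_eq n hn).symm

/-! ### The key algebraic identity -/

lemma Dc_eq (n k : ℕ) :
    ((Dr n k : ℝ) : ℂ) = ((2*n).choose (k+n) : ℂ) - ((2*n).choose (k+1+n) : ℂ) := by
  simp [Dr]

lemma key_identity (n : ℕ) (z : ℂ) :
    (1 - z) * Qnn n z
      = (n.centralBinom : ℂ) - (∑ k ∈ Finset.range n, ((Dr n k : ℝ) : ℂ) * z^(k+1)) - z^(n+1) := by
  have h1 : Qnn n z
      = (∑ k ∈ Finset.range n, ((2*n).choose (k+1+n) : ℂ) * z^(k+1))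
        + ((2*n).choose (0+n) : ℂ) * z^0 :=
    Finset.sum_range_succ' _ n
  have h2 : z * Qnn n z
      = (∑ k ∈ Finset.range n, ((2*n).choose (k+n) : ℂ) * z^(k+1))
        + ((2*n).choose (n+n) : ℂ) * z^(n+1) := by
    rw [Qnn, Finset.mul_sum, ← Finset.sum_range_succ (fun k => ((2*n).choose (k+n) : ℂ) * z^(k+1))]
    exact Finset.sum_congr rfl fun k _ => by ring
  have hcb : ((2*n).choose (0+n) : ℂ) = (n.centralBinom : ℂ) := by
    norm_num [Nat.centralBinom]
  have hlast : ((2*n).choose (n+n) : ℂ) = 1 := by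
    rw [show n + n = 2*n by ring, Nat.choose_self]; norm_num
  have hexp : (1 - z) * Qnn n z = Qnn n z - z * Qnn n z := by ring
  rw [hexp, h2]
  nth_rewrite 1 [h1]
  rw [hcb, hlast]
  rw [show (∑ k ∈ Finset.range n, ((Dr n k : ℝ) : ℂ) * z^(k+1))
      = ∑ k ∈ Finset.range n, (((2*n).choose (k+n) : ℂ) * z^(k+1)
          - ((2*n).choose (k+1+n) : ℂ) * z^(k+1)) from
    Finset.sum_congr rfl fun k _ => by rw [Dc_eq]; ring]
  rw [Finset.sum_sub_distrib]
  ring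

/-! ### Properties of the difference sequence -/

lemma choose_rec (n k : ℕ) : (2*n).choose (k+1+n) * (n+k+1) = (2*n).choose (k+n) * (n-k) := by
  have := Nat.choose_succ_right_eq (2*n) (k+n)
  rw [show k+1+n = (k+n)+1 by omega, show (k+n)+1 = n+k+1 by omega] at *
  rw [show 2*n - (k+n) = n - k by omega] at this
  exact this

lemma choose_rec_real (n k : ℕ) (hk : k ≤ n) :
    ((2*n).choose (k+1+n) : ℝ) * ((n:ℝ)+k+1) = ((2*n).choose (k+n) : ℝ) * ((n:ℝ)-k) := by
  have := congrArg (Nat.cast (R := ℝ)) (choose_rec n k)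
  push_cast [hk] at this
  convert this using 2

lemma Dr_nonneg (n k : ℕ) : 0 ≤ Dr n k := by
  have h := choose_rec n k
  have h2 : (2*n).choose (k+1+n) * (n+k+1) ≤ (2*n).choose (k+n) * (n+k+1) := by
    rw [h]; exact Nat.mul_le_mul_left _ (by omega)
  have := Nat.le_of_mul_le_mul_right h2 (by omega)
  simp only [Dr, sub_nonneg]
  exact_mod_cast this

lemma Dr_key (n k : ℕ) (hk : k ≤ n) :
    Dr n k * ((n:ℝ)+k+1) = ((2*n).choose (k+n) : ℝ) * (2*k+1) := by
  have h := choose_rec_real n k hk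
  simp only [Dr]
  linear_combination -h

lemma Dr_le (n k : ℕ) (hn : 1 ≤ n) (hk : k ≤ n) :
    Dr n k ≤ (n.centralBinom : ℝ) * (2*k+1) / n := by
  have hpos : (0:ℝ) < (n:ℝ)+k+1 := by positivity
  have hn0 : (0:ℝ) < n := by exact_mod_cast hn
  have hch : ((2*n).choose (k+n) : ℝ) ≤ (n.centralBinom : ℝ) := by
    exact_mod_cast Nat.choose_le_centralBinom (k+n) n
  have h1 : Dr n k = ((2*n).choose (k+n) : ℝ) * (2*k+1) / ((n:ℝ)+k+1) := by
    field_simp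
    linarith [Dr_key n k hk]
  rw [h1]
  apply div_le_div₀ (by positivity) (by nlinarith [Dr_nonneg n k]) hn0 (by linarith)

lemma Dr_last (n : ℕ) (hn : 1 ≤ n) : Dr n (n-1) = 2*(n:ℝ) - 1 := by
  have h1 : (n-1)+n = 2*n - 1 := by omega
  have h2 : (n-1)+1+n = 2*n := by omega
  have h3 : (2*n).choose (2*n-1) = 2*n := by
    rw [Nat.choose_symm (by omega : 1 ≤ 2*n), Nat.choose_one_right]
  simp only [Dr, h1, h2, h3, Nat.choose_self]
  push_cast [show (1:ℕ) ≤ 2*n by omega]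
  ring

lemma Dr_step (n k : ℕ) (hk : k+1 ≤ n) :
    ((n:ℝ)+k+1)*((n:ℝ)+k+2) * (Dr n (k+1) - Dr n k)
      = 2 * ((2*n).choose (k+n) : ℝ) * ((n:ℝ) + 1 - 2*((k:ℝ)+1)^2) := by
  have hB := choose_rec_real n k (by omega)
  have hC := choose_rec_real n (k+1) hk
  rw [show ((k:ℕ)+1)+1+n = k+2+n by omega] at hC
  push_cast at hC
  simp only [Dr]
  rw [show ((k:ℕ)+1)+1+n = k+2+n by omega, show ((k:ℕ)+1)+n = k+1+n by omega]
  linear_combination (-((n:ℝ)+k+1))*hC + (2*((n:ℝ)+k+2) - ((n:ℝ)-k-1))*hB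

lemma Dr_mono_up (n k : ℕ) (hk : k+1 ≤ n) (h : 2*(k+1)^2 ≤ n+1) : Dr n k ≤ Dr n (k+1) := by
  have hs := Dr_step n k hk
  have h1 : (0:ℝ) ≤ (n:ℝ) + 1 - 2*((k:ℝ)+1)^2 := by
    have : ((2*(k+1)^2 : ℕ) : ℝ) ≤ ((n+1 : ℕ) : ℝ) := by exact_mod_cast h
    push_cast at this; linarith
  have h2 : (0:ℝ) < ((n:ℝ)+k+1)*((n:ℝ)+k+2) := by positivity
  nlinarith [Nat.cast_nonneg (α := ℝ) ((2*n).choose (k+n))]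

lemma Dr_mono_down (n k : ℕ) (hk : k+1 ≤ n) (h : n+1 < 2*(k+1)^2) : Dr n (k+1) ≤ Dr n k := by
  have hs := Dr_step n k hk
  have h1 : (n:ℝ) + 1 - 2*((k:ℝ)+1)^2 ≤ 0 := by
    have : ((n+1 : ℕ) : ℝ) ≤ ((2*(k+1)^2 : ℕ) : ℝ) := by exact_mod_cast h.le
    push_cast at this; linarith
  have h2 : (0:ℝ) < ((n:ℝ)+k+1)*((n:ℝ)+k+2) := by positivity
  nlinarith [Nat.cast_nonneg (α := ℝ) ((2*n).choose (k+n))]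

lemma thresh_up (n k : ℕ) (h : k < Nat.sqrt ((n+1)/2)) : 2*(k+1)^2 ≤ n+1 := by
  have h2 : (k+1)*(k+1) ≤ (n+1)/2 := Nat.le_sqrt.mp h
  have : (k+1)^2 = (k+1)*(k+1) := by ring
  omega

lemma thresh_down (n k : ℕ) (h : Nat.sqrt ((n+1)/2) ≤ k) : n+1 < 2*(k+1)^2 := by
  have h2 : (n+1)/2 < (k+1)*(k+1) := Nat.sqrt_lt.mp (by omega)
  have : (k+1)^2 = (k+1)*(k+1) := by ring
  omega

/-! ### Total variation bound -/

lemma tv_general (f : ℕ → ℝ) (N s : ℕ)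
    (hup : ∀ k, k < s → k < N → f k ≤ f (k+1))
    (hdown : ∀ k, s ≤ k → k < N → f (k+1) ≤ f k)
    (hnn : ∀ k, 0 ≤ f k) :
    ∑ k ∈ Finset.range N, |f (k+1) - f k| ≤ 2 * f (min s N) := by
  set m := min s N with hm
  have hmN : m ≤ N := min_le_right _ _
  have hsplit : ∑ k ∈ Finset.range N, |f (k+1) - f k|
      = (∑ k ∈ Finset.range m, |f (k+1) - f k|)
        + ∑ k ∈ Finset.Ico m N, |f (k+1) - f k| := by
    rw [Finset.range_eq_Ico, ← Finset.sum_Ico_consecutive _ (Nat.zero_le m) hmN,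
      ← Finset.range_eq_Ico]
  have hA : ∑ k ∈ Finset.range m, |f (k+1) - f k| = f m - f 0 := by
    rw [← Finset.sum_range_sub f m]
    apply Finset.sum_congr rfl
    intro k hk
    have hk' := Finset.mem_range.mp hk
    exact abs_of_nonneg (sub_nonneg.mpr (hup k (lt_of_lt_of_le hk' (min_le_left _ _))
      (lt_of_lt_of_le hk' hmN)))
  have hB : ∑ k ∈ Finset.Ico m N, |f (k+1) - f k| = f m - f N := by
    rcases Nat.lt_or_ge N s with hNs | hsN
    · have : m = N := by omega
      rw [this]; simp
    · have hms : m = s := by omega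
      rw [Finset.sum_Ico_eq_sum_range]
      have : ∀ i ∈ Finset.range (N - m), |f (m+i+1) - f (m+i)| = f (m+i) - f (m+i+1) := by
        intro i hi
        have hi' := Finset.mem_range.mp hi
        rw [abs_sub_comm]
        exact abs_of_nonneg (sub_nonneg.mpr (hdown (m+i) (by omega) (by omega)))
      rw [Finset.sum_congr rfl this]
      have h2 := Finset.sum_range_sub' (fun i => f (m+i)) (N-m)
      rw [show m + (N-m) = N by omega, Nat.add_zero] at h2
      exact h2
  rw [hsplit, hA, hB]
  linarith [hnn 0, hnn N]

/-! ### Geometric partial sums and Abel summation -/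

lemma geom_bound (z : ℂ) (hz : ‖z‖ ≤ 1) (δ : ℝ) (hδ : 0 < δ) (hδz : δ ≤ ‖1 - z‖) (j : ℕ) :
    ‖∑ i ∈ Finset.range j, z^(i+1)‖ ≤ 2/δ := by
  have hz1 : z ≠ 1 := by
    rintro rfl; simp at hδz; linarith
  have h1 : ∑ i ∈ Finset.range j, z^(i+1) = z * ∑ i ∈ Finset.range j, z^i := by
    rw [Finset.mul_sum]; exact Finset.sum_congr rfl fun i _ => by ring
  rw [h1, geom_sum_eq hz1]
  rw [norm_mul, norm_div]
  have hd : δ ≤ ‖z - 1‖ := by rwa [norm_sub_rev]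
  have hzj : ‖z^j - 1‖ ≤ 2 := by
    calc ‖z^j - 1‖ ≤ ‖z^j‖ + ‖(1:ℂ)‖ := norm_sub_le _ _
    _ ≤ 1 + 1 := by
        rw [norm_pow, norm_one]
        exact add_le_add (pow_le_one₀ (norm_nonneg z) hz) le_rfl
    _ = 2 := by norm_num
  calc ‖z‖ * (‖z^j - 1‖ / ‖z - 1‖) ≤ 1 * (2 / δ) := by
        apply mul_le_mul hz _ (by positivity) zero_le_one
        exact div_le_div₀ (by norm_num) hzj hδ hd
  _ = 2/δ := by ring

lemma abel_bound (n : ℕ) (z : ℂ) (hz : ‖z‖ ≤ 1) (δ : ℝ) (hδ : 0 < δ) (hδz : δ ≤ ‖1 - z‖) :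
    ‖∑ k ∈ Finset.range n, ((Dr n k : ℝ) : ℂ) * z^(k+1)‖
      ≤ (Dr n (n-1) + ∑ k ∈ Finset.range (n-1), |Dr n (k+1) - Dr n k|) * (2/δ) := by
  have hparts := Finset.sum_range_by_parts (fun k => ((Dr n k : ℝ) : ℂ)) (fun k => z^(k+1)) n
  simp only [smul_eq_mul] at hparts
  rw [hparts]
  calc ‖_ - _‖ ≤ ‖((Dr n (n-1) : ℝ) : ℂ) * ∑ i ∈ Finset.range n, z^(i+1)‖
        + ‖∑ i ∈ Finset.range (n-1), (((Dr n (i+1) : ℝ) : ℂ) - ((Dr n i : ℝ) : ℂ)) * ∑ j ∈ Finset.range (i+1), z^(j+1)‖ := norm_sub_le _ _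
    _ ≤ Dr n (n-1) * (2/δ) + ∑ i ∈ Finset.range (n-1), |Dr n (i+1) - Dr n i| * (2/δ) := by
        apply add_le_add
        · rw [norm_mul, Complex.norm_real, Real.norm_eq_abs, abs_of_nonneg (Dr_nonneg n _)]
          exact mul_le_mul_of_nonneg_left (geom_bound z hz δ hδ hδz n) (Dr_nonneg n _)
        · calc ‖∑ i ∈ Finset.range (n-1), (((Dr n (i+1) : ℝ) : ℂ) - ((Dr n i : ℝ) : ℂ)) * ∑ j ∈ Finset.range (i+1), z^(j+1)‖
              ≤ ∑ i ∈ Finset.range (n-1), ‖(((Dr n (i+1) : ℝ) : ℂ) - ((Dr n i : ℝ) : ℂ)) * ∑ j ∈ Finset.range (i+1), z^(j+1)‖ := norm_sum_le _ _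
          _ ≤ ∑ i ∈ Finset.range (n-1), |Dr n (i+1) - Dr n i| * (2/δ) := by
              apply Finset.sum_le_sum
              intro i _
              rw [norm_mul, ← Complex.ofReal_sub, Complex.norm_real, Real.norm_eq_abs]
              exact mul_le_mul_of_nonneg_left (geom_bound z hz δ hδ hδz (i+1)) (abs_nonneg _)
    _ = (Dr n (n-1) + ∑ k ∈ Finset.range (n-1), |Dr n (k+1) - Dr n k|) * (2/δ) := by
        rw [← Finset.sum_mul]; ring

/-! ### The disk estimate -/

lemma disk_est (n : ℕ) (hn : 1 ≤ n) (z : ℂ) (hz : ‖z‖ ≤ 1)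
    (δ : ℝ) (hδ : 0 < δ) (hδz : δ ≤ ‖1 - z‖) :
    ‖Qnn n z * ((Real.sqrt (π * n) : ℝ) : ℂ) * (1 - z) / 2 ^ (2 * n) - 1‖ ≤ Eb n δ := by
  have hn0 : (0:ℝ) < n := by exact_mod_cast hn
  set S : ℂ := ∑ k ∈ Finset.range n, ((Dr n k : ℝ) : ℂ) * z^(k+1) with hS
  -- rewrite the expression
  have h4 : ((2:ℂ))^(2*n) = ((4:ℝ)^n : ℂ) := by
    push_cast
    rw [pow_mul]; norm_num
  have hkey : Qnn n z * ((Real.sqrt (π * n) : ℝ) : ℂ) * (1 - z) / 2 ^ (2 * n) - 1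
      = ((cseq n - 1 : ℝ) : ℂ)
        - ((Real.sqrt (π*n) / 4^n : ℝ) : ℂ) * (S + z^(n+1)) := by
    have h1 : Qnn n z * ((Real.sqrt (π * n) : ℝ) : ℂ) * (1 - z)
        = ((Real.sqrt (π * n) : ℝ) : ℂ) * ((1 - z) * Qnn n z) := by ring
    rw [h1, key_identity n z, h4, cseq]
    have h40 : ((4:ℝ):ℂ)^n ≠ 0 := by norm_num
    push_cast
    field_simp
    ring
  rw [hkey]
  -- norm bound
  set q : ℝ := Real.sqrt (π*n) / 4^n with hq
  have hq0 : 0 ≤ q := by positivity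
  have step1 : ‖((cseq n - 1 : ℝ) : ℂ) - ((q : ℝ) : ℂ) * (S + z^(n+1))‖
      ≤ |cseq n - 1| + q * (‖S‖ + 1) := by
    calc ‖((cseq n - 1 : ℝ) : ℂ) - ((q : ℝ) : ℂ) * (S + z^(n+1))‖
        ≤ ‖((cseq n - 1 : ℝ) : ℂ)‖ + ‖((q : ℝ) : ℂ) * (S + z^(n+1))‖ := norm_sub_le _ _
      _ ≤ |cseq n - 1| + q * (‖S‖ + 1) := by
          rw [Complex.norm_real, Real.norm_eq_abs, norm_mul, Complex.norm_real, Real.norm_eq_abs,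
            abs_of_nonneg hq0]
          gcongr
          calc ‖S + z^(n+1)‖ ≤ ‖S‖ + ‖z^(n+1)‖ := norm_add_le _ _
            _ ≤ ‖S‖ + 1 := by
                gcongr
                rw [norm_pow]; exact pow_le_one₀ (norm_nonneg z) hz
  refine le_trans step1 ?_
  -- TV bound
  set s := Nat.sqrt ((n+1)/2) with hsdef
  set m := min s (n-1) with hmdef
  have htv : ∑ k ∈ Finset.range (n-1), |Dr n (k+1) - Dr n k| ≤ 2 * Dr n m := by
    apply tv_general
    · intro k hks hkN
      exact Dr_mono_up n k (by omega) (thresh_up n k hks)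
    · intro k hks hkN
      exact Dr_mono_down n k (by omega) (thresh_down n k hks)
    · exact Dr_nonneg n
  have habel : ‖S‖ ≤ (Dr n (n-1) + 2 * Dr n m) * (2/δ) := by
    refine le_trans (abel_bound n z hz δ hδ hδz) ?_
    have := Dr_nonneg n m
    gcongr
  -- bound Dr n m
  have hsn1 : (1:ℝ) ≤ Real.sqrt n := by
    rw [show (1:ℝ) = Real.sqrt 1 by simp]
    exact Real.sqrt_le_sqrt (by exact_mod_cast hn)
  have hsn0 : (0:ℝ) < Real.sqrt n := by linarith
  have hm_le : (2*(m:ℝ)+1) ≤ 3 * Real.sqrt n := by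
    have h1 : m ≤ Nat.sqrt n := by
      have : s ≤ Nat.sqrt n := Nat.sqrt_le_sqrt (by omega)
      omega
    have h2 : ((Nat.sqrt n : ℕ) : ℝ) ≤ Real.sqrt n := Real.nat_sqrt_le_real_sqrt
    have h3 : (m:ℝ) ≤ Real.sqrt n := le_trans (by exact_mod_cast h1) h2
    linarith
  have hcb0 : (0:ℝ) ≤ (n.centralBinom : ℝ) := Nat.cast_nonneg _
  have hDm : Dr n m ≤ 3 * (n.centralBinom : ℝ) / Real.sqrt n := by
    have h1 : Dr n m ≤ (n.centralBinom : ℝ) * (2*m+1) / n := Dr_le n m hn (by omega)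
    have h2 : (n.centralBinom : ℝ) * (2*m+1) / n ≤ (n.centralBinom : ℝ) * (3*Real.sqrt n) / n := by
      gcongr
    have h3 : (n.centralBinom : ℝ) * (3*Real.sqrt n) / n = 3 * (n.centralBinom : ℝ) / Real.sqrt n := by
      field_simp
      linear_combination ((n.centralBinom:ℝ))*(Real.mul_self_sqrt hn0.le)
    linarith
  -- final arithmetic
  have hDlast := Dr_last n hn
  have hq_split : q * (3 * (n.centralBinom : ℝ) / Real.sqrt n)
      = 3 * Real.sqrt π * ((n.centralBinom : ℝ) / 4^n) := by
    rw [hq, Real.sqrt_mul pi_pos.le]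
    field_simp
  have h4n : (0:ℝ) < 4^n := by positivity
  have hfin : q * (‖S‖ + 1) ≤ (12*Real.sqrt π/δ) * (n.centralBinom / 4^n)
      + (2/δ) * (Real.sqrt (π*n) * (2*n) / 4^n) + Real.sqrt (π*n) / 4^n := by
    have hS1 : ‖S‖ ≤ (2*(n:ℝ) - 1 + 2 * Dr n m) * (2/δ) := by rw [← hDlast]; exact habel
    have hq1 : q * ‖S‖ ≤ q * ((2*(n:ℝ) - 1 + 2 * Dr n m) * (2/δ)) :=
      mul_le_mul_of_nonneg_left (hS1) hq0
    have e1 : q * ((2*(n:ℝ) - 1 + 2 * Dr n m) * (2/δ))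
        = (2/δ) * (q * (2*(n:ℝ) - 1)) + (2/δ) * (2 * (q * Dr n m)) := by ring
    have e2 : q * Dr n m ≤ 3 * Real.sqrt π * ((n.centralBinom : ℝ) / 4^n) := by
      rw [← hq_split]
      exact mul_le_mul_of_nonneg_left hDm hq0
    have e3 : q * (2*(n:ℝ) - 1) ≤ Real.sqrt (π*n) * (2*n) / 4^n := by
      rw [hq, div_mul_eq_mul_div]
      gcongr
      linarith
    have h2δ : (0:ℝ) ≤ 2/δ := by positivity
    have f2 : (2/δ) * (q * (2*(n:ℝ) - 1)) ≤ (2/δ) * (Real.sqrt (π*n) * (2*n) / 4^n) :=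
      mul_le_mul_of_nonneg_left e3 h2δ
    have f3 : (2/δ) * (2 * (q * Dr n m)) ≤ (2/δ) * (2 * (3 * Real.sqrt π * ((n.centralBinom : ℝ) / 4^n))) := by
      apply mul_le_mul_of_nonneg_left _ h2δ
      linarith
    have f4 : (2/δ) * (2 * (3 * Real.sqrt π * ((n.centralBinom : ℝ) / 4^n)))
        = (12*Real.sqrt π/δ) * ((n.centralBinom : ℝ) / 4^n) := by
      ring
    have : q * ‖S‖ ≤ (12*Real.sqrt π/δ) * ((n.centralBinom : ℝ) / 4^n)
        + (2/δ) * (Real.sqrt (π*n) * (2*n) / 4^n) := by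
      calc q * ‖S‖ ≤ q * ((2*(n:ℝ) - 1 + 2 * Dr n m) * (2/δ)) := hq1
        _ = (2/δ) * (q * (2*(n:ℝ) - 1)) + (2/δ) * (2 * (q * Dr n m)) := e1
        _ ≤ (12*Real.sqrt π/δ) * ((n.centralBinom : ℝ) / 4^n)
            + (2/δ) * (Real.sqrt (π*n) * (2*n) / 4^n) := by
            rw [← f4]; linarith
    push_cast
    nlinarith [this]
  rw [Eb]
  push_cast
  push_cast at hfin
  linarith [hfin]

lemma reflect (n : ℕ) (z : ℂ) (hz : z ≠ 0) :
    Qnn n z + Qnn n z⁻¹ = (1+z)^(2*n) / z^n + (n.centralBinom : ℂ) := by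
  have hzn : z^n ≠ 0 := pow_ne_zero n hz
  have hmain : z^n * (Qnn n z + Qnn n z⁻¹) = (1+z)^(2*n) + (n.centralBinom : ℂ) * z^n := by
    have h1 : z^n * Qnn n z = ∑ i ∈ Finset.Ico n (2*n+1), ((2*n).choose i : ℂ) * z^i := by
      rw [Finset.sum_Ico_eq_sum_range, Qnn, Finset.mul_sum]
      rw [show 2*n+1-n = n+1 by omega]
      apply Finset.sum_congr rfl
      intro k hk
      rw [show n + k = k + n by omega, pow_add]
      ring
    have h2 : z^n * Qnn n z⁻¹ = ∑ j ∈ Finset.range (n+1), ((2*n).choose j : ℂ) * z^j := by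
      rw [Qnn, Finset.mul_sum]
      rw [← Finset.sum_range_reflect (fun j => ((2*n).choose j : ℂ) * z^j) (n+1)]
      apply Finset.sum_congr rfl
      intro k hk
      have hkn : k ≤ n := by have := Finset.mem_range.mp hk; omega
      have hc : (2*n).choose (n+1-1-k) = (2*n).choose (k+n) := by
        rw [show n+1-1-k = n-k by omega]
        rw [show n-k = 2*n - (k+n) by omega]
        exact Nat.choose_symm (by omega)
      rw [hc]
      have hzk : z^n * (z⁻¹)^k = z^(n-k) := by
        rw [inv_pow, eq_comm, pow_sub₀ z hz hkn]
      rw [show n+1-1-k = n-k by omega, ← hzk]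
      ring
    have h3 : (1+z)^(2*n) = ∑ i ∈ Finset.range (2*n+1), ((2*n).choose i : ℂ) * z^i := by
      rw [add_comm 1 z, add_pow]
      apply Finset.sum_congr rfl
      intro i hi
      rw [one_pow]
      ring
    have h4 : ∑ i ∈ Finset.range (2*n+1), ((2*n).choose i : ℂ) * z^i
        = (∑ j ∈ Finset.range (n+1), ((2*n).choose j : ℂ) * z^j)
          + ∑ i ∈ Finset.Ico (n+1) (2*n+1), ((2*n).choose i : ℂ) * z^i := by
      rw [Finset.range_eq_Ico, ← Finset.sum_Ico_consecutive _ (by omega : 0 ≤ n+1) (by omega : n+1 ≤ 2*n+1),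
        ← Finset.range_eq_Ico]
    have h5 : ∑ i ∈ Finset.Ico n (2*n+1), ((2*n).choose i : ℂ) * z^i
        = ((2*n).choose n : ℂ) * z^n + ∑ i ∈ Finset.Ico (n+1) (2*n+1), ((2*n).choose i : ℂ) * z^i := by
      exact Finset.sum_eq_sum_Ico_succ_bot (by omega) _
    rw [mul_add, h1, h2, h3, h4, h5]
    rw [Nat.centralBinom]
    ring
  field_simp at hmain ⊢
  linear_combination hmain

lemma outer_est (n : ℕ) (hn : 1 ≤ n) (z : ℂ) (hz1 : 1 ≤ ‖z‖) (M : ℝ) (hM : ‖z‖ ≤ M)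
    (ρ : ℝ) (hρ : ‖(z+1)^2/(4*z)‖ ≤ ρ)
    (δ : ℝ) (hδ : 0 < δ) (hδz : δ ≤ ‖1 - z⁻¹‖) :
    ‖Qnn n z * ((Real.sqrt (π * n) : ℝ) : ℂ) * (1 - z) / 2 ^ (2 * n) - 1‖
      ≤ Real.sqrt (π*n) * ((1+M) * ρ^n) + (1+M) * |cseq n - 1| + M * Eb n δ := by
  have hz0 : z ≠ 0 := by
    intro h; rw [h] at hz1; simp at hz1; linarith
  have hzn : (z:ℂ)^n ≠ 0 := pow_ne_zero n hz0
  have h40 : ((4:ℂ))^n ≠ 0 := pow_ne_zero n (by norm_num)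
  have h2c : ((2:ℂ))^(2*n) = (4:ℂ)^n := by rw [pow_mul]; norm_num
  set c : ℂ := ((Real.sqrt (π*n) : ℝ) : ℂ) with hc
  set w : ℂ := (z+1)^2/(4*z) with hw
  have hwn : w^n = (1+z)^(2*n) / ((4:ℂ)^n * z^n) := by
    rw [hw, div_pow, mul_pow, ← pow_mul, mul_comm 2 n, pow_mul]
    norm_num
    ring
  have hrefl : Qnn n z = (1+z)^(2*n)/z^n + (n.centralBinom : ℂ) - Qnn n z⁻¹ := by
    linear_combination reflect n z hz0
  have hcs : ((cseq n : ℝ) : ℂ) = c * (n.centralBinom : ℂ) / (4:ℂ)^n := by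
    rw [cseq, hc]
    push_cast
    ring
  have hid : Qnn n z * c * (1 - z) / 2 ^ (2 * n) - 1
      = c * (1-z) * w^n + (1-z) * ((cseq n - 1 : ℝ) : ℂ)
        + z * (Qnn n z⁻¹ * c * (1 - z⁻¹) / 2 ^ (2 * n) - 1) := by
    rw [hrefl, h2c, hwn]
    push_cast [hcs]
    field_simp
    ring
  rw [hid]
  have hM0 : (0:ℝ) ≤ M := le_trans (le_trans zero_le_one hz1) hM
  have hzinv : ‖z⁻¹‖ ≤ 1 := by
    rw [norm_inv]
    exact inv_le_one_of_one_le₀ hz1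
  have hdisk := disk_est n hn z⁻¹ hzinv δ hδ hδz
  have h1z : ‖(1:ℂ) - z‖ ≤ 1 + M := by
    calc ‖(1:ℂ) - z‖ ≤ ‖(1:ℂ)‖ + ‖z‖ := norm_sub_le _ _
      _ ≤ 1 + M := by rw [norm_one]; linarith
  have hρ0 : 0 ≤ ρ := le_trans (norm_nonneg _) hρ
  have hwb : ‖w^n‖ ≤ ρ^n := by
    rw [norm_pow]
    exact pow_le_pow_left₀ (norm_nonneg w) hρ n
  calc ‖c * (1-z) * w^n + (1-z) * ((cseq n - 1 : ℝ) : ℂ)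
        + z * (Qnn n z⁻¹ * c * (1 - z⁻¹) / 2 ^ (2 * n) - 1)‖
      ≤ ‖c * (1-z) * w^n‖ + ‖(1-z) * ((cseq n - 1 : ℝ) : ℂ)‖
        + ‖z * (Qnn n z⁻¹ * c * (1 - z⁻¹) / 2 ^ (2 * n) - 1)‖ := norm_add₃_le
    _ ≤ Real.sqrt (π*n) * ((1+M) * ρ^n) + (1+M) * |cseq n - 1| + M * Eb n δ := by
        apply add_le_add (add_le_add ?_ ?_) ?_
        · rw [norm_mul, norm_mul, hc, Complex.norm_real, Real.norm_eq_abs,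
            abs_of_nonneg (Real.sqrt_nonneg _), mul_assoc]
          exact mul_le_mul_of_nonneg_left
            (mul_le_mul h1z hwb (norm_nonneg _) (by linarith)) (Real.sqrt_nonneg _)
        · rw [norm_mul, Complex.norm_real, Real.norm_eq_abs]
          exact mul_le_mul_of_nonneg_right h1z (abs_nonneg _)
        · rw [norm_mul]
          exact mul_le_mul hM hdisk (norm_nonneg _) hM0

lemma sqrt_le_self' {x : ℝ} (hx : 1 ≤ x) : Real.sqrt x ≤ x := by
  nlinarith [Real.sq_sqrt (by linarith : (0:ℝ) ≤ x), Real.sqrt_nonneg x]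

lemma sqrtpin_le (n : ℕ) (hn : 1 ≤ n) : Real.sqrt (π*n) ≤ π*n := by
  apply sqrt_le_self'
  have : (1:ℝ) ≤ n := by exact_mod_cast hn
  nlinarith [pi_gt_three]

lemma rho_tendsto (ρ : ℝ) (h0 : 0 ≤ ρ) (h1 : ρ < 1) :
    Tendsto (fun n : ℕ => Real.sqrt (π*n) * ρ^n) atTop (nhds 0) := by
  have hg : Tendsto (fun n : ℕ => π * ((n:ℝ)^1 * ρ^n)) atTop (nhds 0) := by
    have h := (tendsto_pow_const_mul_const_pow_of_abs_lt_one 1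
      (show |ρ| < 1 by rwa [abs_of_nonneg h0])).const_mul π
    simpa using h
  apply squeeze_zero' ?_ ?_ hg
  · filter_upwards with n
    positivity
  · filter_upwards [eventually_ge_atTop 1] with n hn
    have := sqrtpin_le n hn
    have hρn : (0:ℝ) ≤ ρ^n := by positivity
    nlinarith

lemma sqrtpin_mul_tendsto :
    Tendsto (fun n : ℕ => Real.sqrt (π*n) * (2*n) / 4^n) atTop (nhds 0) := by
  have hg : Tendsto (fun n : ℕ => (2*π) * ((n:ℝ)^2 * (1/4)^n)) atTop (nhds 0) := by
    have h := (tendsto_pow_const_mul_const_pow_of_abs_lt_one 2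
      (show |(1/4:ℝ)| < 1 by rw [abs_of_nonneg (by norm_num : (0:ℝ) ≤ 1/4)]; norm_num)).const_mul (2*π)
    simpa using h
  apply squeeze_zero' ?_ ?_ hg
  · filter_upwards with n; positivity
  · filter_upwards [eventually_ge_atTop 1] with n hn
    have h1 := sqrtpin_le n hn
    have h4 : (0:ℝ) < 4^n := by positivity
    have he : (2*π) * ((n:ℝ)^2 * (1/4)^n) = π*(n:ℝ)*(2*n)/4^n := by
      rw [div_pow, one_pow]
      field_simp
    rw [he]
    gcongr

lemma sqrtpin_tendsto :
    Tendsto (fun n : ℕ => Real.sqrt (π*n) / 4^n) atTop (nhds 0) := by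
  have hg : Tendsto (fun n : ℕ => π * ((n:ℝ)^1 * (1/4)^n)) atTop (nhds 0) := by
    have h := (tendsto_pow_const_mul_const_pow_of_abs_lt_one 1
      (show |(1/4:ℝ)| < 1 by rw [abs_of_nonneg (by norm_num : (0:ℝ) ≤ 1/4)]; norm_num)).const_mul π
    simpa using h
  apply squeeze_zero' ?_ ?_ hg
  · filter_upwards with n; positivity
  · filter_upwards [eventually_ge_atTop 1] with n hn
    have h1 := sqrtpin_le n hn
    have h4 : (0:ℝ) < 4^n := by positivity
    have he : π * ((n:ℝ)^1 * (1/4)^n) = π*(n:ℝ)/4^n := by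
      rw [div_pow, one_pow]
      field_simp
    rw [he]
    gcongr

lemma cb4_tendsto : Tendsto (fun n : ℕ => (n.centralBinom:ℝ) / 4^n) atTop (nhds 0) := by
  have hsqrt : Tendsto Real.sqrt atTop atTop := by
    apply tendsto_atTop_atTop.mpr
    intro b
    exact ⟨b^2, fun a ha => by
      calc b ≤ |b| := le_abs_self b
      _ = Real.sqrt (b^2) := (Real.sqrt_sq_eq_abs b).symm
      _ ≤ Real.sqrt a := Real.sqrt_le_sqrt ha⟩
  have hs : Tendsto (fun n : ℕ => Real.sqrt (π*n)) atTop atTop :=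
    hsqrt.comp (Tendsto.const_mul_atTop pi_pos tendsto_natCast_atTop_atTop)
  have h := cseq_tendsto.mul hs.inv_tendsto_atTop
  rw [mul_zero] at h
  apply h.congr'
  filter_upwards [eventually_ge_atTop 1] with n hn
  have hn0 : (0:ℝ) < n := by exact_mod_cast hn
  have hsp : (0:ℝ) < Real.sqrt (π*n) := Real.sqrt_pos.mpr (by positivity)
  rw [cseq]
  simp only [Pi.inv_apply]
  field_simp

lemma Eb_tendsto (δ : ℝ) (hδ : 0 < δ) : Tendsto (fun n => Eb n δ) atTop (nhds 0) := by
  have h1 : Tendsto (fun n => |cseq n - 1|) atTop (nhds 0) := by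
    have := (cseq_tendsto.sub (tendsto_const_nhds (x := (1:ℝ)))).abs
    simpa using this
  have h2 := cb4_tendsto.const_mul (12*Real.sqrt π/δ)
  have h3 := sqrtpin_mul_tendsto.const_mul (2/δ)
  have h := ((h1.add h2).add h3).add sqrtpin_tendsto
  simpa [Eb] using h

lemma Eb_nonneg (n : ℕ) (δ : ℝ) (hδ : 0 < δ) : 0 ≤ Eb n δ := by
  unfold Eb
  have s1 : (0:ℝ) ≤ |cseq n - 1| := abs_nonneg _
  have s2 : (0:ℝ) ≤ (12*Real.sqrt π/δ) * (n.centralBinom / 4^n) := by positivity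
  have s3 : (0:ℝ) ≤ (2/δ) * (Real.sqrt (π*n) * (2*n) / 4^n) := by positivity
  have s4 : (0:ℝ) ≤ Real.sqrt (π*n) / 4^n := by positivity
  linarith

theorem stmt13 (K : Set ℂ) (hK : IsCompact K)
    (hKsub : K ⊆ {z : ℂ | ‖(z + 1) ^ 2 / (4 * z)‖ < 1} ∪
      {z : ℂ | 1 < ‖(z + 1) ^ 2 / (4 * z)‖ ∧ ‖z‖ < 1}) :
    TendstoUniformlyOn
      (fun (n : ℕ) (z : ℂ) =>
        Qnn n z * ((Real.sqrt (π * n) : ℝ) : ℂ) * (1 - z) / 2 ^ (2 * n))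
      (fun _ => 1) atTop K := by
  rcases K.eq_empty_or_nonempty with rfl | hne
  · exact tendstoUniformlyOn_empty
  have h1K : (1:ℂ) ∉ K := by
    intro h
    have hval : ((1:ℂ)+1)^2/(4*1) = 1 := by norm_num
    rcases hKsub h with h' | h'
    · simp only [Set.mem_setOf_eq, hval, norm_one] at h'
      exact lt_irrefl _ h'
    · simp only [Set.mem_setOf_eq, hval, norm_one] at h'
      exact lt_irrefl _ h'.1
  obtain ⟨z₀, hz₀K, hz₀min⟩ := hK.exists_isMinOn hne
    ((continuous_const.sub continuous_id).norm.continuousOn :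
      ContinuousOn (fun z : ℂ => ‖1 - z‖) K)
  set δ0 := ‖(1:ℂ) - z₀‖ with hδ0def
  have hδ0 : 0 < δ0 := by
    rw [hδ0def, norm_pos_iff, sub_ne_zero]
    intro h
    exact h1K (h ▸ hz₀K)
  have hδ0K : ∀ z ∈ K, δ0 ≤ ‖1 - z‖ := fun z hz => hz₀min hz
  obtain ⟨z₁, hz₁K, hz₁max⟩ := hK.exists_isMaxOn hne continuous_norm.continuousOn
  set M := max ‖z₁‖ 1 with hMdef
  have hM1 : (1:ℝ) ≤ M := le_max_right _ _
  have hM0 : (0:ℝ) < M := lt_of_lt_of_le one_pos hM1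
  have hMK : ∀ z ∈ K, ‖z‖ ≤ M := fun z hz => le_trans (hz₁max hz) (le_max_left _ _)
  obtain ⟨ρ, hρ0, hρ1, hρK⟩ : ∃ ρ : ℝ, 0 ≤ ρ ∧ ρ < 1 ∧
      ∀ z ∈ K, 1 ≤ ‖z‖ → ‖(z+1)^2/(4*z)‖ ≤ ρ := by
    set K' := K ∩ {z : ℂ | 1 ≤ ‖z‖} with hK'def
    have hK'c : IsCompact K' := hK.inter_right (isClosed_le continuous_const continuous_norm)
    rcases K'.eq_empty_or_nonempty with hKe | hKne
    · refine ⟨0, le_rfl, one_pos, fun z hz h1 => absurd ?_ (Set.notMem_empty z)⟩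
      rw [← hKe]
      exact ⟨hz, h1⟩
    · have hcont : ContinuousOn (fun z : ℂ => ‖(z+1)^2/(4*z)‖) K' := by
        apply continuous_norm.comp_continuousOn
        apply ContinuousOn.div
        · exact ((continuous_id.add continuous_const).pow 2).continuousOn
        · exact (continuous_const.mul continuous_id).continuousOn
        · intro z hz h40
          have h1 : (1:ℝ) ≤ ‖z‖ := hz.2
          have hz0 : z = 0 := by
            rcases mul_eq_zero.mp h40 with h | h
            · exact absurd h (by norm_num)
            · exact h
          rw [hz0] at h1
          norm_num at h1
      obtain ⟨z₂, hz₂K', hz₂max⟩ := hK'c.exists_isMaxOn hKne hcont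
      refine ⟨‖(z₂+1)^2/(4*z₂)‖, norm_nonneg _, ?_,
        fun z hz h1 => hz₂max (⟨hz, h1⟩ : z ∈ K')⟩
      rcases hKsub hz₂K'.1 with h' | h'
      · exact h'
      · exfalso
        have h2 : (1:ℝ) ≤ ‖z₂‖ := hz₂K'.2
        simp only [Set.mem_setOf_eq] at h'
        have h3 : ‖z₂‖ < 1 := by exact h'.2
        linarith
  have hδM : 0 < δ0/M := div_pos hδ0 hM0
  set B : ℕ → ℝ := fun n => Eb n δ0 + (Real.sqrt (π*n) * ((1+M) * ρ^n)
    + (1+M) * |cseq n - 1| + M * Eb n (δ0/M)) with hBdef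
  have hB : Tendsto B atTop (nhds 0) := by
    have t1 := Eb_tendsto δ0 hδ0
    have t2 : Tendsto (fun n : ℕ => Real.sqrt (π*n) * ((1+M) * ρ^n)) atTop (nhds 0) := by
      have := (rho_tendsto ρ hρ0 hρ1).const_mul (1+M)
      rw [mul_zero] at this
      exact this.congr (fun n => by ring)
    have t3 : Tendsto (fun n : ℕ => |cseq n - 1|) atTop (nhds 0) := by
      simpa using (cseq_tendsto.sub (tendsto_const_nhds (x := (1:ℝ)))).abs
    have t3' := t3.const_mul (1+M)
    have t4 := (Eb_tendsto (δ0/M) hδM).const_mul M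
    have h := t1.add ((t2.add t3').add t4)
    have h0 : (0:ℝ) + (0 + (1+M)*0 + M*0) = 0 := by ring
    rw [h0] at h
    exact h
  rw [Metric.tendstoUniformlyOn_iff]
  intro ε hε
  filter_upwards [hB.eventually_lt_const hε, eventually_ge_atTop 1] with n hnB hn1
  intro z hzK
  rw [dist_comm, dist_eq_norm]
  show ‖Qnn n z * ((Real.sqrt (π * n) : ℝ) : ℂ) * (1 - z) / 2 ^ (2 * n) - 1‖ < ε
  have hbound : ‖Qnn n z * ((Real.sqrt (π * n) : ℝ) : ℂ) * (1 - z) / 2 ^ (2 * n) - 1‖ ≤ B n := by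
    rcases le_or_gt ‖z‖ 1 with hle | hgt
    · have hd := disk_est n hn1 z hle δ0 hδ0 (hδ0K z hzK)
      have r1 : (0:ℝ) ≤ Real.sqrt (π*n) * ((1+M) * ρ^n) := by positivity
      have r2 : (0:ℝ) ≤ (1+M) * |cseq n - 1| := by positivity
      have r3 : (0:ℝ) ≤ M * Eb n (δ0/M) :=
        mul_nonneg hM0.le (Eb_nonneg n _ hδM)
      rw [hBdef]
      dsimp only
      linarith
    · have h1z : 1 ≤ ‖z‖ := hgt.le
      have hz0 : z ≠ 0 := by
        intro h; rw [h] at hgt; norm_num at hgt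
      have hδz : δ0/M ≤ ‖1 - z⁻¹‖ := by
        have he : (1 : ℂ) - z⁻¹ = (z - 1)/z := by field_simp
        rw [he, norm_div]
        rw [div_le_div_iff₀ hM0 (by positivity : (0:ℝ) < ‖z‖)]
        have hn1z : δ0 ≤ ‖z - 1‖ := by rw [norm_sub_rev]; exact hδ0K z hzK
        exact mul_le_mul hn1z (hMK z hzK) (norm_nonneg z) (norm_nonneg _)
      have ho := outer_est n hn1 z h1z M (hMK z hzK) ρ (hρK z hzK h1z) (δ0/M) hδM hδz
      have hEb0 : 0 ≤ Eb n δ0 := Eb_nonneg n δ0 hδ0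
      rw [hBdef]
      dsimp only
      linarith
  exact lt_of_le_of_lt hbound hnB
end

section
/- Let n, m be positive integers, λ ∈ ℂ, r > 0, and set ρ = 2^m(|λ| + r) − |λ|. If all zeros of the polynomial φ_n (of degree n) lie in the closed disc {|z| ≤ r}, then all zeros of the iterated integral I_{m,λ}(φ_n) lie in the closed disc {|z| ≤ ρ}. -/
open MeasureTheory

/-- Normalized `m`-fold iterated integral of a degree-`n` polynomial `p`
with base point `lam`, as a single integral. -/
noncomputable def iterI (n m : ℕ) (lam : ℂ) (p : Polynomial ℂ) (z : ℂ) : ℂ :=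
  ((Nat.factorial (n + m) : ℂ) /
      ((Nat.factorial (m - 1) : ℂ) * (Nat.factorial n : ℂ))) *
    segInt (fun s => (z - s) ^ (m - 1) * p.eval s) lam z

open Polynomial Finset

noncomputable def pairing (N : ℕ) (P Q : Polynomial ℂ) : ℂ :=
  ∑ k ∈ Finset.range (N+1),
    (-1:ℂ)^k * (k.factorial : ℂ) * (((N-k).factorial : ℕ) : ℂ) * P.coeff k * Q.coeff (N-k)

lemma coeff_X_mul_derivative (P : Polynomial ℂ) (k : ℕ) :
    (X * derivative P).coeff k = (k : ℂ) * P.coeff k := by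
  cases k with
  | zero => simp [Polynomial.mul_coeff_zero]
  | succ i =>
      rw [Polynomial.coeff_X_mul, Polynomial.coeff_derivative]
      push_cast
      ring

lemma coeff_polar (M : ℕ) (ζ : ℂ) (P : Polynomial ℂ) (k : ℕ) :
    (C ((M:ℕ):ℂ) * P + (C ζ - X) * derivative P).coeff k
      = ((M:ℂ) - k) * P.coeff k + ζ * ((k:ℂ)+1) * P.coeff (k+1) := by
  rw [Polynomial.coeff_add, Polynomial.coeff_C_mul, sub_mul, Polynomial.coeff_sub,
    Polynomial.coeff_C_mul, Polynomial.coeff_derivative, coeff_X_mul_derivative]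
  push_cast; ring

lemma pairing_step (N : ℕ) (P Q₁ : Polynomial ℂ) (ζ : ℂ) (hQ₁ : Q₁.natDegree ≤ N) :
    pairing (N+1) P ((X - C ζ) * Q₁) =
      pairing N (C (((N+1:ℕ)):ℂ) * P + (C ζ - X) * derivative P) Q₁ := by
  have hq : Q₁.coeff (N+1) = 0 :=
    coeff_eq_zero_of_natDegree_lt (lt_of_le_of_lt hQ₁ (Nat.lt_succ_self N))
  have hQc : ∀ j : ℕ, ((X - C ζ) * Q₁).coeff j = (X * Q₁).coeff j - ζ * Q₁.coeff j := by
    intro j; rw [sub_mul, Polynomial.coeff_sub, Polynomial.coeff_C_mul]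
  unfold pairing
  -- abbreviations
  set a : ℕ → ℂ := fun k => P.coeff k with ha
  set q : ℕ → ℂ := fun k => Q₁.coeff k with hqq
  have hSA : ∑ k ∈ Finset.range (N+1+1),
      (-1:ℂ)^k * (k.factorial : ℂ) * (((N+1-k).factorial : ℕ) : ℂ) * a k * (X * Q₁).coeff (N+1-k)
      = ∑ k ∈ Finset.range (N+1),
        (-1:ℂ)^k * (k.factorial : ℂ) * (((N+1-k).factorial : ℕ) : ℂ) * a k * q (N-k) := by
    rw [Finset.sum_range_succ]
    have h0 : (X * Q₁).coeff (N+1-(N+1)) = 0 := by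
      simp [Polynomial.mul_coeff_zero]
    rw [h0, mul_zero, add_zero]
    refine Finset.sum_congr rfl (fun k hk => ?_)
    have hkN : k ≤ N := Nat.lt_succ_iff.mp (Finset.mem_range.mp hk)
    have h1 : N+1-k = (N-k)+1 := by omega
    rw [h1, Polynomial.coeff_X_mul]
  have hSB : ∑ k ∈ Finset.range (N+1+1),
      (-1:ℂ)^k * (k.factorial : ℂ) * (((N+1-k).factorial : ℕ) : ℂ) * a k * q (N+1-k)
      = - ∑ k ∈ Finset.range (N+1),
        (-1:ℂ)^k * (((k+1).factorial : ℕ) : ℂ) * (((N-k).factorial : ℕ) : ℂ) * a (k+1) * q (N-k) := by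
    rw [Finset.sum_range_succ']
    have h0 : q (N+1) = 0 := hq
    simp only [Nat.sub_zero, h0, mul_zero, add_zero]
    rw [← Finset.sum_neg_distrib]
    refine Finset.sum_congr rfl (fun k hk => ?_)
    have h1 : N+1-(k+1) = N-k := by omega
    rw [h1]
    ring
  -- expand LHS
  have hL : ∑ k ∈ Finset.range (N+1+1),
      (-1:ℂ)^k * (k.factorial : ℂ) * (((N+1-k).factorial : ℕ) : ℂ) * a k * ((X - C ζ) * Q₁).coeff (N+1-k)
      = (∑ k ∈ Finset.range (N+1),
          (-1:ℂ)^k * (k.factorial : ℂ) * (((N+1-k).factorial : ℕ) : ℂ) * a k * q (N-k))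
        + ζ * ∑ k ∈ Finset.range (N+1),
          (-1:ℂ)^k * (((k+1).factorial : ℕ) : ℂ) * (((N-k).factorial : ℕ) : ℂ) * a (k+1) * q (N-k) := by
    have : ∀ k ∈ Finset.range (N+1+1),
        (-1:ℂ)^k * (k.factorial : ℂ) * (((N+1-k).factorial : ℕ) : ℂ) * a k * ((X - C ζ) * Q₁).coeff (N+1-k)
        = (-1:ℂ)^k * (k.factorial : ℂ) * (((N+1-k).factorial : ℕ) : ℂ) * a k * (X * Q₁).coeff (N+1-k)
          - ζ * ((-1:ℂ)^k * (k.factorial : ℂ) * (((N+1-k).factorial : ℕ) : ℂ) * a k * q (N+1-k)) := by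
      intro k _; rw [hQc]; ring
    rw [Finset.sum_congr rfl this, Finset.sum_sub_distrib, ← Finset.mul_sum, hSA, hSB]
    ring
  rw [hL]
  -- expand RHS
  have hR : ∑ k ∈ Finset.range (N+1),
      (-1:ℂ)^k * (k.factorial : ℂ) * (((N-k).factorial : ℕ) : ℂ)
        * (C (((N+1:ℕ)):ℂ) * P + (C ζ - X) * derivative P).coeff k * q (N-k)
      = (∑ k ∈ Finset.range (N+1),
          (-1:ℂ)^k * (k.factorial : ℂ) * (((N+1-k).factorial : ℕ) : ℂ) * a k * q (N-k))
        + ζ * ∑ k ∈ Finset.range (N+1),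
          (-1:ℂ)^k * (((k+1).factorial : ℕ) : ℂ) * (((N-k).factorial : ℕ) : ℂ) * a (k+1) * q (N-k) := by
    rw [Finset.mul_sum, ← Finset.sum_add_distrib]
    refine Finset.sum_congr rfl (fun k hk => ?_)
    have hkN : k ≤ N := Nat.lt_succ_iff.mp (Finset.mem_range.mp hk)
    rw [coeff_polar (N+1) ζ P k]
    have hfac : (((N+1-k).factorial : ℕ) : ℂ) = (((N+1:ℕ):ℂ) - k) * (((N-k).factorial : ℕ) : ℂ) := by
      rw [show N+1-k = (N-k)+1 from by omega, Nat.factorial_succ]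
      push_cast [Nat.cast_sub hkN]
      ring
    have hfac2 : (((k+1).factorial : ℕ) : ℂ) = ((k:ℂ)+1) * (k.factorial : ℂ) := by
      rw [Nat.factorial_succ]; push_cast; ring
    rw [hfac, hfac2]
    push_cast
    ring
  rw [hR]

lemma eval_derivative_prodXsubC (S : Multiset ℂ) (w : ℂ) (hw : ∀ b ∈ S, w ≠ b) :
    (Polynomial.derivative (S.map (fun b => X - C b)).prod).eval w
      = ((S.map (fun b => X - C b)).prod).eval w * (S.map (fun b => (w - b)⁻¹)).sum := by
  induction S using Multiset.induction with
  | empty => simp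
  | cons x s ih =>
      have hx : w ≠ x := hw x (Multiset.mem_cons_self x s)
      have hws : ∀ b ∈ s, w ≠ b := fun b hb => hw b (Multiset.mem_cons_of_mem hb)
      simp only [Multiset.map_cons, Multiset.prod_cons, Multiset.sum_cons]
      rw [derivative_mul, Polynomial.eval_add, Polynomial.eval_mul, Polynomial.eval_mul]
      rw [ih hws]
      simp only [derivative_sub, derivative_X, derivative_C, sub_zero, Polynomial.eval_one,
        Polynomial.eval_sub, Polynomial.eval_X, Polynomial.eval_C]
      have hx0 : w - x ≠ 0 := sub_ne_zero.mpr hx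
      field_simp
      simp only [Polynomial.eval_sub, Polynomial.eval_mul, Polynomial.eval_X, Polynomial.eval_C]
      ring

lemma inv_mem_disc {ξ : ℂ} {δ : ℝ} (hδ : 0 < δ) (hre : δ ≤ ξ.re) :
    ‖ξ⁻¹ - (((2*δ)⁻¹ : ℝ) : ℂ)‖ ≤ (2*δ)⁻¹ := by
  have hξ0 : ξ ≠ 0 := by
    intro h; rw [h] at hre; simp at hre; linarith
  have hξa : 0 < ‖ξ‖ := norm_pos_iff.2 hξ0
  have h2δ : (2*δ:ℝ) ≠ 0 := by positivity
  have h2δc : ((2*δ:ℝ):ℂ) ≠ 0 := Complex.ofReal_ne_zero.2 h2δ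
  have h2δc' : (2*(δ:ℂ)) ≠ 0 := by
    intro h
    apply h2δ
    have := congrArg Complex.re h
    simpa using this
  have heq : ξ⁻¹ - (((2*δ)⁻¹:ℝ):ℂ) = (ξ⁻¹ * (((2*δ:ℝ)):ℂ)⁻¹) * ((((2*δ:ℝ)):ℂ) - ξ) := by
    push_cast
    field_simp
    rw [sub_div, mul_div_cancel_right₀ (2:ℂ) (Complex.ofReal_ne_zero.2 hδ.ne')]
  rw [heq, norm_mul, norm_mul, norm_inv, norm_inv, Complex.norm_of_nonneg (by positivity : (0:ℝ) ≤ 2*δ)]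
  have habs : ‖(((2*δ:ℝ)):ℂ) - ξ‖ ≤ ‖ξ‖ := by
    have h2 : ‖(((2*δ:ℝ)):ℂ) - ξ‖^2 ≤ ‖ξ‖^2 := by
      rw [Complex.sq_norm, Complex.sq_norm]
      simp only [Complex.normSq_apply, Complex.sub_re, Complex.sub_im, Complex.ofReal_re,
        Complex.ofReal_im]
      nlinarith
    exact (pow_le_pow_iff_left₀ (norm_nonneg _) (norm_nonneg _)
      (two_ne_zero)).1 h2
  have h1 : (‖ξ‖)⁻¹ * (2*δ)⁻¹ * ‖(((2*δ:ℝ)):ℂ) - ξ‖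
      ≤ (‖ξ‖)⁻¹ * (2*δ)⁻¹ * ‖ξ‖ := by
    apply mul_le_mul_of_nonneg_left habs
    positivity
  calc (‖ξ‖)⁻¹ * (2*δ)⁻¹ * ‖(((2*δ:ℝ)):ℂ) - ξ‖
      ≤ (‖ξ‖)⁻¹ * (2*δ)⁻¹ * ‖ξ‖ := h1
    _ = (2*δ)⁻¹ := by field_simp

lemma laguerre (c : ℝ) (M : ℕ) (hM : 0 < M) (P : Polynomial ℂ) (hP : P ≠ 0)
    (hPd : P.natDegree ≤ M) (hroots : ∀ b ∈ P.roots, b.re ≤ c) (ζ : ℂ) (hζ : c < ζ.re)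
    (w : ℂ) (hw : (C ((M:ℕ):ℂ) * P + (C ζ - X) * Polynomial.derivative P).eval w = 0) :
    w.re ≤ c := by
  by_contra hwc
  push_neg at hwc
  have hPw : P.eval w ≠ 0 := by
    intro h
    exact absurd (hroots w ((Polynomial.mem_roots hP).2 h)) (not_le.2 hwc)
  have hwb : ∀ b ∈ P.roots, w ≠ b := by
    intro b hb he
    exact absurd (hroots b hb) (by rw [← he]; exact not_le.2 hwc)
  have hsplit := (IsAlgClosed.splits P).eq_prod_roots
  set R : Polynomial ℂ := (P.roots.map (fun b => X - C b)).prod with hR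
  have ha : P.leadingCoeff ≠ 0 := leadingCoeff_ne_zero.mpr hP
  have hRw : R.eval w ≠ 0 := by
    intro h
    apply hPw
    rw [hsplit, Polynomial.eval_mul, h, mul_zero]
  set V : ℂ := (P.roots.map (fun b => (w - b)⁻¹)).sum with hV
  have hPev : P.eval w = P.leadingCoeff * R.eval w := by
    conv_lhs => rw [hsplit]
    rw [Polynomial.eval_mul, Polynomial.eval_C]
  have hrel : ((M:ℕ):ℂ) + (ζ - w) * V = 0 := by
    have hder : Polynomial.derivative P = C P.leadingCoeff * Polynomial.derivative R := by
      conv_lhs => rw [hsplit]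
      rw [derivative_C_mul]
    have h2 := hw
    rw [Polynomial.eval_add, Polynomial.eval_mul, Polynomial.eval_mul, Polynomial.eval_C,
      Polynomial.eval_sub, Polynomial.eval_C, Polynomial.eval_X, hder, Polynomial.eval_mul,
      Polynomial.eval_C, eval_derivative_prodXsubC P.roots w hwb, hPev] at h2
    have h3 : P.leadingCoeff * R.eval w * (((M:ℕ):ℂ) + (ζ - w) * V) = 0 := by
      rw [← h2]; ring
    rcases mul_eq_zero.1 h3 with h4 | h4
    · exact absurd h4 (mul_ne_zero ha hRw)
    · exact h4
  have hMc : ((M:ℕ):ℂ) ≠ 0 := Nat.cast_ne_zero.2 hM.ne'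
  have hwζ : w ≠ ζ := by
    intro h
    rw [h, sub_self, zero_mul, add_zero] at hrel
    exact hMc hrel
  set d : ℕ := Multiset.card P.roots with hd
  have hdM : d ≤ M := le_trans (Polynomial.card_roots' P) hPd
  rcases Nat.eq_zero_or_pos d with hd0 | hdpos
  · have hroots0 : P.roots = 0 := Multiset.card_eq_zero.mp hd0
    rw [hV, hroots0] at hrel
    simp at hrel
    exact hMc (by exact_mod_cast hrel)
  -- main case
  set δ : ℝ := w.re - c with hδdef
  have hδ : 0 < δ := sub_pos.2 hwc
  set s : ℝ := (2*δ)⁻¹ with hsdef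
  have hs : 0 < s := by positivity
  have claim1 : ∀ b ∈ P.roots, ‖(w - b)⁻¹ - (s:ℂ)‖ ≤ s := by
    intro b hb
    have hbre : b.re ≤ c := hroots b hb
    have hξre : δ ≤ (w - b).re := by
      simp only [Complex.sub_re, hδdef]; linarith
    exact inv_mem_disc hδ hξre
  have hsum : V - (((d:ℝ)*s:ℝ):ℂ) = (P.roots.map (fun b => (w - b)⁻¹ - (s:ℂ))).sum := by
    rw [Multiset.sum_map_sub]
    congr 1
    rw [Multiset.map_const', Multiset.sum_replicate, ← hd]
    push_cast
    rw [nsmul_eq_mul]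
  have claim2 : ‖V - (((d:ℝ)*s:ℝ):ℂ)‖ ≤ (d:ℝ)*s := by
    rw [hsum]
    calc ‖(P.roots.map (fun b => (w - b)⁻¹ - (s:ℂ))).sum‖
        ≤ ((P.roots.map (fun b => (w - b)⁻¹ - (s:ℂ))).map (fun x => ‖x‖)).sum := by
          exact norm_multiset_sum_le (P.roots.map (fun b => (w - b)⁻¹ - (s:ℂ)))
      _ = (P.roots.map (fun b => ‖(w - b)⁻¹ - (s:ℂ)‖)).sum := by
          rw [Multiset.map_map]; rfl
      _ ≤ (P.roots.map (fun _ => s)).sum := Multiset.sum_map_le_sum_map _ _ claim1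
      _ = (d:ℝ)*s := by
          rw [Multiset.map_const', Multiset.sum_replicate, ← hd, nsmul_eq_mul]
  have hVval : V = ((M:ℕ):ℂ) / (w - ζ) := by
    rw [eq_div_iff (sub_ne_zero.2 hwζ)]
    linear_combination -hrel
  -- numeric conclusion
  have hnsq : 0 < Complex.normSq (w - ζ) := Complex.normSq_pos.2 (sub_ne_zero.2 hwζ)
  have hVre : V.re = (M:ℝ) * (w-ζ).re / Complex.normSq (w-ζ) := by
    rw [hVval]
    simp [Complex.div_re, Complex.natCast_re, Complex.natCast_im]
  have hVnsq : Complex.normSq V = (M:ℝ)^2 / Complex.normSq (w-ζ) := by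
    rw [hVval, Complex.normSq_div]
    simp [Complex.normSq_natCast]
    try ring
  have e1 : Complex.normSq (V - (((d:ℝ)*s:ℝ):ℂ)) ≤ ((d:ℝ)*s)^2 := by
    rw [← Complex.sq_norm]
    nlinarith [claim2, norm_nonneg (V - (((d:ℝ)*s:ℝ):ℂ)), mul_nonneg (Nat.cast_nonneg d) hs.le]
  have e2 : Complex.normSq V ≤ 2 * ((d:ℝ)*s) * V.re := by
    have : Complex.normSq (V - (((d:ℝ)*s:ℝ):ℂ))
        = Complex.normSq V - 2*((d:ℝ)*s)*V.re + ((d:ℝ)*s)^2 := by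
      simp [Complex.normSq_apply, Complex.sub_re, Complex.sub_im, Complex.ofReal_re,
        Complex.ofReal_im]
      ring
    nlinarith [e1]
  -- conclude
  have hyre : δ ≤ (w - ζ).re := by
    have hd1 : (1:ℝ) ≤ (d:ℝ) := by exact_mod_cast hdpos
    have hdMr : (d:ℝ) ≤ (M:ℝ) := by exact_mod_cast hdM
    have hM1 : (1:ℝ) ≤ (M:ℝ) := by exact_mod_cast hM
    rw [hVnsq, hVre] at e2
    have hsval : 2 * s * δ = 1 := by
      rw [hsdef]; field_simp
    -- e2 : M^2/nsq ≤ 2*(d*s)*(M*(w-ζ).re/nsq)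
    have e3 : (M:ℝ)^2 ≤ 2*((d:ℝ)*s)*((M:ℝ)*(w-ζ).re) := by
      rw [div_le_iff₀ hnsq] at e2
      calc (M:ℝ)^2 ≤ 2*((d:ℝ)*s)*((M:ℝ)*(w-ζ).re / Complex.normSq (w-ζ)) * Complex.normSq (w-ζ) := e2
        _ = 2*((d:ℝ)*s)*((M:ℝ)*(w-ζ).re) := by field_simp
    have h5 := mul_le_mul_of_nonneg_right e3 hδ.le
    have h6 : 2*((d:ℝ)*s)*((M:ℝ)*(w-ζ).re)*δ = (d:ℝ)*((M:ℝ)*(w-ζ).re) := by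
      linear_combination ((d:ℝ)*((M:ℝ)*(w-ζ).re)) * hsval
    have h4 : (M:ℝ)^2*δ ≤ (d:ℝ)*((M:ℝ)*(w-ζ).re) := by linarith
    by_contra hyc
    push_neg at hyc
    have hMpos : (0:ℝ) < (M:ℝ) := lt_of_lt_of_le one_pos hM1
    have hdposr : (0:ℝ) < (d:ℝ) := lt_of_lt_of_le one_pos hd1
    have p1 : (d:ℝ)*((M:ℝ)*(w-ζ).re) < (d:ℝ)*((M:ℝ)*δ) :=
      mul_lt_mul_of_pos_left (mul_lt_mul_of_pos_left hyc hMpos) hdposr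
    have p2 : (d:ℝ)*((M:ℝ)*δ) ≤ (M:ℝ)*((M:ℝ)*δ) :=
      mul_le_mul_of_nonneg_right hdMr (mul_nonneg hMpos.le hδ.le)
    have p3 : (M:ℝ)^2*δ = (M:ℝ)*((M:ℝ)*δ) := by ring
    linarith
  have : ζ.re ≤ c := by
    have : (w-ζ).re = w.re - ζ.re := by simp [Complex.sub_re]
    rw [this] at hyre
    linarith [hyre]
  linarith

lemma grace (c : ℝ) : ∀ N : ℕ, ∀ P Q : Polynomial ℂ, P ≠ 0 → Q ≠ 0 →
    P.natDegree ≤ N → Q.natDegree = N →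
    (∀ b ∈ P.roots, b.re ≤ c) → (∀ ζ ∈ Q.roots, c < ζ.re) →
    pairing N P Q ≠ 0 := by
  intro N
  induction N with
  | zero =>
      intro P Q hP hQ hPd hQd _ _
      have hP0 : P.coeff 0 ≠ 0 := by
        intro h
        obtain ⟨x, hx⟩ := Polynomial.natDegree_eq_zero.1 (Nat.le_zero.1 hPd)
        apply hP
        rw [← hx]
        rw [← hx] at h
        simp at h
        rw [h]; simp
      have hQ0 : Q.coeff 0 ≠ 0 := by
        intro h
        obtain ⟨x, hx⟩ := Polynomial.natDegree_eq_zero.1 hQd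
        apply hQ
        rw [← hx]
        rw [← hx] at h
        simp at h
        rw [h]; simp
      simp [pairing]
      exact ⟨hP0, hQ0⟩
  | succ N ih =>
      intro P Q hP hQ hPd hQd hPr hQr
      obtain ⟨ζ, hζroot⟩ : ∃ ζ, Q.IsRoot ζ := Complex.exists_root
        (by rw [Polynomial.degree_eq_natDegree hQ, hQd]; exact_mod_cast Nat.succ_pos N)
      have hζmem : ζ ∈ Q.roots := (Polynomial.mem_roots hQ).2 hζroot
      have hζre : c < ζ.re := hQr ζ hζmem
      set Q₁ : Polynomial ℂ := Q /ₘ (X - C ζ) with hQ₁def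
      have hfac : (X - C ζ) * Q₁ = Q := (Polynomial.mul_divByMonic_eq_iff_isRoot).2 hζroot
      have hQ₁0 : Q₁ ≠ 0 := by
        intro h; rw [h, mul_zero] at hfac; exact hQ hfac.symm
      have hQ₁d : Q₁.natDegree = N := by
        have hXC : (X - C ζ : Polynomial ℂ) ≠ 0 := Polynomial.X_sub_C_ne_zero ζ
        have := Polynomial.natDegree_mul hXC hQ₁0
        rw [hfac, Polynomial.natDegree_X_sub_C, hQd] at this
        omega
      have hQ₁r : ∀ ζ' ∈ Q₁.roots, c < ζ'.re := by
        intro ζ' h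
        apply hQr
        rw [← hfac, Polynomial.roots_mul (hfac.symm ▸ hQ)]
        exact Multiset.mem_add.2 (Or.inr h)
      set Pz : Polynomial ℂ := C (((N+1:ℕ)):ℂ) * P + (C ζ - X) * derivative P with hPzdef
      have hPz0 : Pz ≠ 0 := by
        intro h
        have hrel : C (((N+1:ℕ)):ℂ) * P = (X - C ζ) * derivative P := by
          have : C (((N+1:ℕ)):ℂ) * P = -((C ζ - X) * derivative P) := by
            rw [← sub_eq_zero]
            rw [← h, hPzdef]
            ring
          rw [this]; ring
        rcases Nat.eq_zero_or_pos P.natDegree with hd0 | hdpos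
        · obtain ⟨x, hx⟩ := Polynomial.natDegree_eq_zero.1 hd0
          rw [← hx] at hrel
          simp only [derivative_C, mul_zero] at hrel
          rw [← Polynomial.C_mul] at hrel
          have : ((N+1:ℕ):ℂ) * x = 0 := by
            exact_mod_cast Polynomial.C_eq_zero.1 hrel
          have hx0 : x = 0 := by
            rcases mul_eq_zero.1 this with h1 | h1
            · exact absurd h1 (Nat.cast_ne_zero.2 (Nat.succ_ne_zero N))
            · exact h1
          exact hP (by rw [← hx, hx0, map_zero])
        · obtain ⟨b, hb⟩ : ∃ b, P.IsRoot b := Complex.exists_root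
            (by rw [Polynomial.degree_eq_natDegree hP]; exact_mod_cast hdpos)
          have hbmem : b ∈ P.roots := (Polynomial.mem_roots hP).2 hb
          have hbre : b.re ≤ c := hPr b hbmem
          have hbζ : b ≠ ζ := by
            intro h; rw [h] at hbre; linarith
          have hμ : 0 < P.rootMultiplicity b := (Polynomial.rootMultiplicity_pos hP).2 hb
          have hL0 : C (((N+1:ℕ)):ℂ) * P ≠ 0 := by
            apply mul_ne_zero _ hP
            simp only [ne_eq, Polynomial.C_eq_zero]
            exact Nat.cast_ne_zero.2 (Nat.succ_ne_zero N)
          have hR0 : (X - C ζ) * derivative P ≠ 0 := hrel ▸ hL0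
          have hD0 : derivative P ≠ 0 := by
            intro h; rw [h, mul_zero] at hR0; exact hR0 rfl
          have e1 : Polynomial.rootMultiplicity b (C (((N+1:ℕ)):ℂ) * P)
              = Polynomial.rootMultiplicity b P := by
            rw [Polynomial.rootMultiplicity_mul hL0]
            have : Polynomial.rootMultiplicity b (C (((N+1:ℕ)):ℂ)) = 0 := by
              apply Polynomial.rootMultiplicity_eq_zero
              simp only [Polynomial.IsRoot, Polynomial.eval_C]
              exact Nat.cast_ne_zero.2 (Nat.succ_ne_zero N)
            rw [this, zero_add]
          have e2 : Polynomial.rootMultiplicity b ((X - C ζ) * derivative P)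
              = Polynomial.rootMultiplicity b P - 1 := by
            rw [Polynomial.rootMultiplicity_mul hR0]
            have h1 : Polynomial.rootMultiplicity b (X - C ζ) = 0 := by
              apply Polynomial.rootMultiplicity_eq_zero
              simp only [Polynomial.IsRoot, Polynomial.eval_sub, Polynomial.eval_X,
                Polynomial.eval_C]
              exact sub_ne_zero.2 hbζ
            rw [h1, zero_add, Polynomial.derivative_rootMultiplicity_of_root hb]
          rw [hrel, e2] at e1
          omega
      have hPzd : Pz.natDegree ≤ N := by
        rw [Polynomial.natDegree_le_iff_coeff_eq_zero]
        intro j hj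
        rw [hPzdef, coeff_polar (N+1) ζ P j]
        have h1 : P.coeff (j+1) = 0 :=
          Polynomial.coeff_eq_zero_of_natDegree_lt (by omega)
        rcases eq_or_lt_of_le (show N+1 ≤ j by omega) with hj' | hj'
        · subst hj'
          rw [h1]
          ring
        · have h2 : P.coeff j = 0 := Polynomial.coeff_eq_zero_of_natDegree_lt (by omega)
          rw [h1, h2]
          ring
      have hPzr : ∀ b ∈ Pz.roots, b.re ≤ c := by
        intro b hbmem
        have hb : Pz.IsRoot b := (Polynomial.mem_roots hPz0).1 hbmem
        exact laguerre c (N+1) (Nat.succ_pos N) P hP hPd hPr ζ hζre b hb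
      rw [← hfac, pairing_step N P Q₁ ζ (le_of_eq hQ₁d)]
      exact ih Pz Q₁ hPz0 hQ₁0 hPzd hQ₁d hPzr hQ₁r

noncomputable def integ (q : Polynomial ℂ) : Polynomial ℂ :=
  ∑ i ∈ Finset.range (q.natDegree + 1), C (q.coeff i / ((i:ℂ)+1)) * X^(i+1)

lemma integ_coeff_succ (q : Polynomial ℂ) (j : ℕ) :
    (integ q).coeff (j+1) = q.coeff j / ((j:ℂ)+1) := by
  rw [integ, Polynomial.finset_sum_coeff]
  have h1 : ∀ i ∈ Finset.range (q.natDegree + 1),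
      (C (q.coeff i / ((i:ℂ)+1)) * X^(i+1)).coeff (j+1)
        = if i = j then q.coeff i / ((i:ℂ)+1) else 0 := by
    intro i _
    rw [Polynomial.coeff_C_mul, Polynomial.coeff_X_pow]
    by_cases h : i = j
    · simp [h]
    · have : ¬ (j+1 = i+1) := by omega
      simp [h, this, Ne.symm h]
  rw [Finset.sum_congr rfl h1, Finset.sum_ite_eq' (Finset.range (q.natDegree+1)) j
    (fun i => q.coeff i / ((i:ℂ)+1))]
  by_cases hj : j ∈ Finset.range (q.natDegree + 1)
  · rw [if_pos hj]
  · rw [if_neg hj]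
    have : q.natDegree < j := by
      simp only [Finset.mem_range] at hj; omega
    rw [Polynomial.coeff_eq_zero_of_natDegree_lt this, zero_div]

lemma integ_coeff_zero (q : Polynomial ℂ) : (integ q).coeff 0 = 0 := by
  rw [integ, Polynomial.finset_sum_coeff]
  apply Finset.sum_eq_zero
  intro i _
  rw [Polynomial.coeff_C_mul, Polynomial.coeff_X_pow]
  simp

lemma derivative_integ (q : Polynomial ℂ) : Polynomial.derivative (integ q) = q := by
  ext j
  rw [Polynomial.coeff_derivative, integ_coeff_succ]
  have : ((j:ℂ)+1) ≠ 0 := Nat.cast_add_one_ne_zero j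
  field_simp

noncomputable def prim (lam : ℂ) (q : Polynomial ℂ) : Polynomial ℂ :=
  integ q - C ((integ q).eval lam)

lemma derivative_prim (lam : ℂ) (q : Polynomial ℂ) :
    Polynomial.derivative (prim lam q) = q := by
  rw [prim, derivative_sub, derivative_C, sub_zero, derivative_integ]

lemma prim_eval_lam (lam : ℂ) (q : Polynomial ℂ) : (prim lam q).eval lam = 0 := by
  simp [prim]

lemma prim_ne_zero (lam : ℂ) {q : Polynomial ℂ} (hq : q ≠ 0) : prim lam q ≠ 0 := by
  intro h
  apply hq
  rw [← derivative_prim lam q, h, derivative_zero]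

lemma prim_natDegree (lam : ℂ) {q : Polynomial ℂ} (hq : q ≠ 0) :
    (prim lam q).natDegree = q.natDegree + 1 := by
  have hcoeff : (prim lam q).coeff (q.natDegree + 1) ≠ 0 := by
    rw [prim, Polynomial.coeff_sub, integ_coeff_succ, Polynomial.coeff_C]
    rw [if_neg (Nat.succ_ne_zero _)]
    rw [sub_zero]
    apply div_ne_zero
    · exact Polynomial.leadingCoeff_ne_zero.2 hq
    · exact Nat.cast_add_one_ne_zero q.natDegree
  have hub : (prim lam q).natDegree ≤ q.natDegree + 1 := by
    rw [Polynomial.natDegree_le_iff_coeff_eq_zero]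
    intro j hj
    obtain ⟨i, rfl⟩ : ∃ i, j = i + 1 := ⟨j - 1, by omega⟩
    rw [prim, Polynomial.coeff_sub, integ_coeff_succ, Polynomial.coeff_C,
      if_neg (Nat.succ_ne_zero _), sub_zero,
      Polynomial.coeff_eq_zero_of_natDegree_lt (show q.natDegree < i by omega), zero_div]
  exact le_antisymm hub (Polynomial.le_natDegree_of_ne_zero hcoeff)

-- iterated primitives
lemma iter_prim_ne_zero (lam : ℂ) {p : Polynomial ℂ} (hp : p ≠ 0) (k : ℕ) :
    (prim lam)^[k] p ≠ 0 := by
  induction k with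
  | zero => simpa using hp
  | succ k ih =>
      rw [Function.iterate_succ_apply']
      exact prim_ne_zero lam ih

lemma iter_prim_natDegree (lam : ℂ) {p : Polynomial ℂ} (hp : p ≠ 0) (k : ℕ) :
    ((prim lam)^[k] p).natDegree = p.natDegree + k := by
  induction k with
  | zero => simp
  | succ k ih =>
      rw [Function.iterate_succ_apply', prim_natDegree lam (iter_prim_ne_zero lam hp k), ih]
      omega

lemma iter_prim_deriv (lam : ℂ) (p : Polynomial ℂ) (k : ℕ) :
    Polynomial.derivative ((prim lam)^[k+1] p) = (prim lam)^[k] p := by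
  rw [Function.iterate_succ_apply', derivative_prim]

lemma iter_prim_eval_lam (lam : ℂ) (p : Polynomial ℂ) (k : ℕ) :
    ((prim lam)^[k+1] p).eval lam = 0 := by
  rw [Function.iterate_succ_apply', prim_eval_lam]

-- FTC along the segment
lemma hasDerivAt_eval_line (Qp : Polynomial ℂ) (a u : ℂ) (t : ℝ) :
    HasDerivAt (fun t : ℝ => Qp.eval (a + (t:ℂ)*u))
      ((Polynomial.derivative Qp).eval (a + (t:ℂ)*u) * u) t := by
  have h1 : HasDerivAt (fun w : ℂ => Qp.eval (a + w*u))
      ((Polynomial.derivative Qp).eval (a + (t:ℂ)*u) * u) ((t:ℂ)) := by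
    have hin : HasDerivAt (fun w : ℂ => a + w*u) u ((t:ℂ)) := by
      simpa using ((hasDerivAt_id ((t:ℂ))).mul_const u).const_add a
    exact HasDerivAt.comp ((t:ℂ)) (Polynomial.hasDerivAt Qp _) hin
  exact h1.comp_ofReal

lemma segInt_poly (Qp : Polynomial ℂ) (a b : ℂ) :
    segInt (fun s => (Polynomial.derivative Qp).eval s) a b = Qp.eval b - Qp.eval a := by
  have hd : ∀ t ∈ Set.uIcc (0:ℝ) 1, HasDerivAt (fun t : ℝ => Qp.eval (a + (t:ℂ)*(b-a)))
      ((Polynomial.derivative Qp).eval (a + (t:ℂ)*(b-a)) * (b-a)) t :=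
    fun t _ => hasDerivAt_eval_line Qp a (b-a) t
  have hcont : Continuous fun t : ℝ => (Polynomial.derivative Qp).eval (a + (t:ℂ)*(b-a)) * (b-a) := by
    apply Continuous.mul _ continuous_const
    exact (Polynomial.derivative Qp).continuous_aeval.comp
      (continuous_const.add (Complex.continuous_ofReal.mul continuous_const))
  have hftc := intervalIntegral.integral_eq_sub_of_hasDerivAt hd
    (hcont.intervalIntegrable 0 1)
  have h2 : ∫ t in (0:ℝ)..1, (Polynomial.derivative Qp).eval (a + (t:ℂ)*(b-a)) * (b-a)
      = (b-a) * ∫ t in (0:ℝ)..1, (Polynomial.derivative Qp).eval (a + (t:ℂ)*(b-a)) := by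
    rw [← intervalIntegral.integral_const_mul]
    apply intervalIntegral.integral_congr
    intro t _
    ring
  rw [h2] at hftc
  rw [segInt, hftc]
  norm_num

lemma cc_mul (M i : ℕ) (hi : i < M) :
    (M.factorial / (M - i).factorial) * (M - i) = M.factorial / (M - (i+1)).factorial := by
  set a := M - i - 1 with ha
  have h1 : M - i = a + 1 := by omega
  have h2 : M - (i+1) = a := by omega
  obtain ⟨t, ht⟩ := Nat.factorial_dvd_factorial (show a+1 ≤ M by omega)
  have h3 : M.factorial / (a+1).factorial = t := by
    rw [ht, Nat.mul_div_cancel_left t (Nat.factorial_pos _)]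
  have h4 : M.factorial / a.factorial = (a+1) * t := by
    rw [ht, Nat.factorial_succ]
    rw [show (a+1) * a.factorial * t = a.factorial * ((a+1)*t) by ring]
    exact Nat.mul_div_cancel_left _ (Nat.factorial_pos _)
  rw [h1, h2, h3, h4]
  ring

lemma segInt_key (p : Polynomial ℂ) (lam z : ℂ) (M : ℕ) :
    segInt (fun s => (z - s)^M * p.eval s) lam z
      = ((M.factorial : ℕ) : ℂ) * (((prim lam)^[M+1]) p).eval z := by
  set u : ℂ := z - lam with hu
  set cc : ℕ → ℂ := fun i => ((M.factorial / (M - i).factorial : ℕ) : ℂ) with hcc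
  set Qi : ℕ → Polynomial ℂ := fun i => (prim lam)^[i] p with hQi
  set H : ℝ → ℂ := fun t => ∑ i ∈ Finset.range (M+1),
      cc i * ((z - (lam + (t:ℂ)*u))^(M-i) * (Qi (i+1)).eval (lam + (t:ℂ)*u)) with hH
  have hD : ∀ t : ℝ, HasDerivAt H
      (u * ((z - (lam + (t:ℂ)*u))^M * p.eval (lam + (t:ℂ)*u))) t := by
    intro t
    have hterm : ∀ i ∈ Finset.range (M+1), HasDerivAt
        (fun s : ℝ => cc i * ((z - (lam + (s:ℂ)*u))^(M-i) * (Qi (i+1)).eval (lam + (s:ℂ)*u)))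
        (cc i * ((((M-i:ℕ):ℂ) * (z - (lam + (t:ℂ)*u))^(M-i-1) * (-u)) * (Qi (i+1)).eval (lam + (t:ℂ)*u)
          + (z - (lam + (t:ℂ)*u))^(M-i) * ((Qi i).eval (lam + (t:ℂ)*u) * u))) t := by
      intro i _
      have hc : ∀ w : ℂ, HasDerivAt
          (fun w : ℂ => cc i * ((z - (lam + w*u))^(M-i) * (Qi (i+1)).eval (lam + w*u)))
          (cc i * ((((M-i:ℕ):ℂ) * (z - (lam + w*u))^(M-i-1) * (-u)) * (Qi (i+1)).eval (lam + w*u)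
            + (z - (lam + w*u))^(M-i) * ((Qi i).eval (lam + w*u) * u))) w := by
        intro w
        have haff : HasDerivAt (fun w : ℂ => lam + w*u) u w := by
          simpa using ((hasDerivAt_id w).mul_const u).const_add lam
        have hsub : HasDerivAt (fun w : ℂ => z - (lam + w*u)) (-u) w := haff.const_sub z
        have hpow : HasDerivAt (fun w : ℂ => (z - (lam + w*u))^(M-i))
            ((((M-i:ℕ):ℂ) * (z - (lam + w*u))^(M-i-1)) * (-u)) w :=
          (hasDerivAt_pow (M-i) (z - (lam + w*u))).comp w hsub
        have hev : HasDerivAt (fun w : ℂ => (Qi (i+1)).eval (lam + w*u))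
            ((Polynomial.derivative (Qi (i+1))).eval (lam + w*u) * u) w :=
          (Polynomial.hasDerivAt (Qi (i+1)) _).comp w haff
        have := (hpow.mul hev).const_mul (cc i)
        have hder : Polynomial.derivative (Qi (i+1)) = Qi i := iter_prim_deriv lam p i
        rw [hder] at this
        exact this
      exact (hc ((t:ℂ))).comp_ofReal
    have hsum := HasDerivAt.fun_sum hterm
    have hval : ∑ i ∈ Finset.range (M+1),
        (cc i * ((((M-i:ℕ):ℂ) * (z - (lam + (t:ℂ)*u))^(M-i-1) * (-u)) * (Qi (i+1)).eval (lam + (t:ℂ)*u)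
          + (z - (lam + (t:ℂ)*u))^(M-i) * ((Qi i).eval (lam + (t:ℂ)*u) * u)))
        = u * ((z - (lam + (t:ℂ)*u))^M * p.eval (lam + (t:ℂ)*u)) := by
      set x : ℂ := z - (lam + (t:ℂ)*u) with hx
      set y : ℕ → ℂ := fun i => (Qi i).eval (lam + (t:ℂ)*u) with hy
      have hsplit : ∀ i ∈ Finset.range (M+1),
          cc i * ((((M-i:ℕ):ℂ) * x^(M-i-1) * (-u)) * y (i+1) + x^(M-i) * (y i * u))
          = (cc i * u * x^(M-i) * y i) - (cc i * ((M-i:ℕ):ℂ) * u * x^(M-i-1) * y (i+1)) := by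
        intro i _; ring
      rw [Finset.sum_congr rfl hsplit, Finset.sum_sub_distrib]
      have hB : ∑ i ∈ Finset.range (M+1), cc i * ((M-i:ℕ):ℂ) * u * x^(M-i-1) * y (i+1)
          = ∑ i ∈ Finset.range M, cc (i+1) * u * x^(M-(i+1)) * y (i+1) := by
        rw [Finset.sum_range_succ]
        have h0 : ((M-M:ℕ):ℂ) = 0 := by simp
        rw [h0]
        simp only [mul_zero, zero_mul, add_zero]
        refine Finset.sum_congr rfl (fun i hi => ?_)
        have hiM : i < M := Finset.mem_range.mp hi
        have h1 : cc i * ((M-i:ℕ):ℂ) = cc (i+1) := by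
          rw [hcc]
          push_cast [← cc_mul M i hiM]
          ring
        have h2 : M - i - 1 = M - (i+1) := by omega
        rw [← h1, h2]
        try ring
      have hA : ∑ i ∈ Finset.range (M+1), cc i * u * x^(M-i) * y i
          = (∑ i ∈ Finset.range M, cc (i+1) * u * x^(M-(i+1)) * y (i+1)) + cc 0 * u * x^(M-0) * y 0 := by
        rw [Finset.sum_range_succ']
      rw [hA, hB]
      have hcc0 : cc 0 = 1 := by
        rw [hcc]
        simp only [Nat.sub_zero]
        rw [Nat.div_self (Nat.factorial_pos M)]
        simp
      have hy0 : y 0 = p.eval (lam + (t:ℂ)*u) := by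
        rw [hy, hQi]
        simp
      rw [hcc0, hy0]
      simp only [Nat.sub_zero]
      ring
    rw [← hval]
    exact hsum
  have hcont : Continuous fun t : ℝ => u * ((z - (lam + (t:ℂ)*u))^M * p.eval (lam + (t:ℂ)*u)) := by
    have hline : Continuous fun t : ℝ => lam + (t:ℂ)*u :=
      continuous_const.add (Complex.continuous_ofReal.mul continuous_const)
    apply continuous_const.mul
    apply Continuous.mul
    · exact ((continuous_const.sub hline).pow M)
    · exact p.continuous_aeval.comp hline
  have hftc := intervalIntegral.integral_eq_sub_of_hasDerivAt (f := H)
    (fun t _ => hD t) (hcont.intervalIntegrable 0 1)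
  have hH1 : H 1 = ((M.factorial : ℕ) : ℂ) * (Qi (M+1)).eval z := by
    rw [hH]
    have hz1 : lam + ((1:ℝ):ℂ)*u = z := by
      rw [hu]; push_cast; ring
    simp only [hz1]
    rw [Finset.sum_eq_single M]
    · rw [sub_self, Nat.sub_self, pow_zero, one_mul]
      congr 1
      rw [hcc]
      simp
    · intro i hi hiM
      have : M - i ≠ 0 := by
        have := Finset.mem_range.mp hi
        omega
      rw [sub_self, zero_pow this]
      ring
    · intro h
      exact absurd (Finset.self_mem_range_succ M) h
  have hH0 : H 0 = 0 := by
    rw [hH]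
    apply Finset.sum_eq_zero
    intro i _
    have hz0 : lam + ((0:ℝ):ℂ)*u = lam := by push_cast; ring
    rw [hz0]
    have := iter_prim_eval_lam lam p i
    rw [hQi]
    rw [this]
    ring
  rw [hH1, hH0, sub_zero] at hftc
  rw [segInt, ← hftc, ← intervalIntegral.integral_const_mul]

noncomputable def AA (N : ℕ) : Polynomial ℂ :=
  C (((N:ℂ)+1)⁻¹) * (X^(N+1) - (X + C (-1))^(N+1))

lemma AA_coeff_le (N j : ℕ) (hj : j ≤ N) :
    (AA N).coeff j = ((N:ℂ)+1)⁻¹ * ((-1:ℂ)^(N-j) * ((N+1).choose j : ℕ)) := by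
  rw [AA, Polynomial.coeff_C_mul, Polynomial.coeff_sub, Polynomial.coeff_X_pow,
    Polynomial.coeff_X_add_C_pow]
  have h1 : N+1-j = (N-j)+1 := by omega
  rw [if_neg (by omega : ¬ j = N+1), h1, pow_succ]
  ring

lemma AA_coeff_N (N : ℕ) : (AA N).coeff N = 1 := by
  rw [AA_coeff_le N N le_rfl]
  simp only [Nat.sub_self, pow_zero, one_mul]
  rw [Nat.choose_succ_self_right]
  push_cast
  rw [inv_mul_cancel₀]
  exact Nat.cast_add_one_ne_zero N

lemma AA_ne_zero (N : ℕ) : AA N ≠ 0 := by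
  intro h
  have := AA_coeff_N N
  rw [h] at this
  simp at this

lemma AA_natDegree (N : ℕ) : (AA N).natDegree = N := by
  have hle : (AA N).natDegree ≤ N := by
    rw [Polynomial.natDegree_le_iff_coeff_eq_zero]
    intro j hj
    rw [AA, Polynomial.coeff_C_mul, Polynomial.coeff_sub, Polynomial.coeff_X_pow,
      Polynomial.coeff_X_add_C_pow]
    rcases eq_or_lt_of_le (show N+1 ≤ j by omega) with h1 | h1
    · rw [if_pos h1.symm, ← h1]
      simp
    · rw [if_neg (by omega : ¬ j = N+1), Nat.choose_eq_zero_of_lt h1]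
      simp
  exact le_antisymm hle (Polynomial.le_natDegree_of_ne_zero (by rw [AA_coeff_N]; exact one_ne_zero))

lemma AA_roots_re (N : ℕ) (ζ : ℂ) (hζ : ζ ∈ (AA N).roots) : ζ.re = 1/2 := by
  have hroot : (AA N).IsRoot ζ := (Polynomial.mem_roots (AA_ne_zero N)).1 hζ
  have heval : ζ^(N+1) = (ζ - 1)^(N+1) := by
    have h := hroot
    rw [Polynomial.IsRoot, AA, Polynomial.eval_mul, Polynomial.eval_C, Polynomial.eval_sub,
      Polynomial.eval_pow, Polynomial.eval_pow, Polynomial.eval_add, Polynomial.eval_X,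
      Polynomial.eval_C] at h
    have hinv : ((N:ℂ)+1)⁻¹ ≠ 0 := inv_ne_zero (Nat.cast_add_one_ne_zero N)
    have := (mul_eq_zero.1 h).resolve_left hinv
    have h2 : ζ^(N+1) - (ζ + (-1))^(N+1) = 0 := this
    have h3 : ζ + (-1) = ζ - 1 := by ring
    rw [h3] at h2
    exact sub_eq_zero.1 h2
  have habs : ‖ζ‖ = ‖ζ - 1‖ := by
    have h := congrArg norm heval
    rw [norm_pow, norm_pow] at h
    exact le_antisymm ((pow_le_pow_iff_left₀ (norm_nonneg _)
      (norm_nonneg _) (Nat.succ_ne_zero N)).1 h.le)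
      ((pow_le_pow_iff_left₀ (norm_nonneg _)
      (norm_nonneg _) (Nat.succ_ne_zero N)).1 h.ge)
  have h2 : Complex.normSq ζ = Complex.normSq (ζ - 1) := by
    rw [← Complex.sq_norm, ← Complex.sq_norm, habs]
  simp only [Complex.normSq_apply, Complex.sub_re, Complex.sub_im, Complex.one_re,
    Complex.one_im] at h2
  nlinarith [h2]

lemma pairing_AA (N : ℕ) (P : Polynomial ℂ) :
    pairing N P (AA N) = ((N.factorial : ℕ) : ℂ) *
      ∑ j ∈ Finset.range (N+1), P.coeff j * (((j:ℂ)+1)⁻¹) := by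
  rw [pairing, Finset.mul_sum]
  refine Finset.sum_congr rfl (fun k hk => ?_)
  have hkN : k ≤ N := Nat.lt_succ_iff.mp (Finset.mem_range.mp hk)
  rw [AA_coeff_le N (N-k) (by omega)]
  have h1 : N - (N-k) = k := by omega
  rw [h1]
  have hch : (((N+1).choose (N-k) : ℕ) : ℂ) * (((N-k).factorial : ℕ) : ℂ)
      * (((k+1).factorial : ℕ) : ℂ) = (((N+1).factorial : ℕ) : ℂ) := by
    have := Nat.choose_mul_factorial_mul_factorial (show N-k ≤ N+1 by omega)
    have h2 : N+1-(N-k) = k+1 := by omega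
    rw [h2] at this
    exact_mod_cast congrArg (Nat.cast : ℕ → ℂ) this
  have hN1 : ((N:ℂ)+1) ≠ 0 := Nat.cast_add_one_ne_zero N
  have hk1 : ((k:ℂ)+1) ≠ 0 := Nat.cast_add_one_ne_zero k
  have hfacN1 : (((N+1).factorial : ℕ) : ℂ) = ((N:ℂ)+1) * ((N.factorial : ℕ) : ℂ) := by
    rw [Nat.factorial_succ]; push_cast; ring
  have hfack1 : (((k+1).factorial : ℕ) : ℂ) = ((k:ℂ)+1) * ((k.factorial : ℕ) : ℂ) := by
    rw [Nat.factorial_succ]; push_cast; ring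
  have hsq : (-1:ℂ)^k * (-1:ℂ)^k = 1 := by
    rw [← pow_add]
    exact Even.neg_one_pow ⟨k, rfl⟩
  have hkey : (k.factorial : ℂ) * (((N-k).factorial : ℕ) : ℂ) * (((N+1).choose (N-k) : ℕ) : ℂ) * ((k:ℂ)+1)
      = ((N.factorial : ℕ) : ℂ) * ((N:ℂ)+1) := by
    rw [hfacN1, hfack1] at hch
    linear_combination hch
  trans (((-1:ℂ)^k * (-1:ℂ)^k) * (P.coeff k * ((k.factorial : ℂ) * (((N-k).factorial : ℕ) : ℂ)
      * (((N+1).choose (N-k) : ℕ) : ℂ) * ((N:ℂ)+1)⁻¹)))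
  · ring
  rw [hsq, one_mul]
  field_simp
  linear_combination (P.coeff k) * hkey

lemma integral_eval (R : Polynomial ℂ) {K : ℕ} (hR : R.natDegree < K) :
    ∫ t in (0:ℝ)..1, R.eval ((t:ℝ):ℂ)
      = ∑ j ∈ Finset.range K, R.coeff j * (((j:ℂ)+1)⁻¹) := by
  have hcongr : Set.EqOn (fun t : ℝ => R.eval ((t:ℝ):ℂ))
      (fun t : ℝ => ∑ j ∈ Finset.range K, R.coeff j * ((t:ℂ))^j) (Set.uIcc 0 1) := by
    intro t _
    exact Polynomial.eval_eq_sum_range' hR _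
  rw [intervalIntegral.integral_congr hcongr]
  rw [intervalIntegral.integral_finsetSum (f := fun j (t : ℝ) => R.coeff j * ((t:ℂ))^j) (fun j _ =>
    ((continuous_const.mul (Complex.continuous_ofReal.pow j)).intervalIntegrable 0 1))]
  refine Finset.sum_congr rfl (fun j _ => ?_)
  rw [intervalIntegral.integral_const_mul]
  congr 1
  have hcongr2 : Set.EqOn (fun t : ℝ => ((t:ℂ))^j)
      (fun t : ℝ => (((t^j : ℝ)):ℂ)) (Set.uIcc 0 1) := by
    intro t _
    push_cast
    ring
  rw [intervalIntegral.integral_congr hcongr2, intervalIntegral.integral_ofReal, integral_pow]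
  push_cast
  rw [one_pow, zero_pow (Nat.succ_ne_zero j)]
  norm_num

lemma zeros_bound (p : Polynomial ℂ) (hp : p ≠ 0) (hd : 0 < p.natDegree) (lam : ℂ) (r : ℝ)
    (hr : 0 < r) (hz : ∀ x : ℂ, p.eval x = 0 → ‖x‖ ≤ r) :
    ∀ k, ∀ z : ℂ, ((prim lam)^[k] p).eval z = 0 →
      ‖z‖ ≤ 2^k * (‖lam‖ + r) - ‖lam‖ := by
  intro k
  induction k with
  | zero =>
      intro z h
      simp only [Function.iterate_zero, id_eq] at h
      have := hz z h
      rw [pow_zero, one_mul]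
      linarith
  | succ k ih =>
      intro z0 h0
      by_contra hcon
      push_neg at hcon
      have h2k : (1:ℝ) ≤ 2^k := one_le_pow₀ one_le_two
      have hal0 : 0 ≤ ‖lam‖ := norm_nonneg _
      set al := ‖lam‖ with hal
      set az := ‖z0‖ with haz
      set A := al + r with hA
      set Rk : ℝ := 2^k * A - al with hRk
      have hRkr : r ≤ Rk := by rw [hRk, hA]; nlinarith
      have hRk0 : 0 < Rk := lt_of_lt_of_le hr hRkr
      have hp2 : (2:ℝ)^(k+1) = 2 * 2^k := by rw [pow_succ]; ring
      have hazal : al + 2*Rk < az := by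
        rw [hRk]
        have := hcon
        rw [hp2] at this
        nlinarith [this]
      have hazpos : 0 < az := by nlinarith
      have halaz : al < az := by nlinarith
      have hz0lam : z0 ≠ lam := by
        intro h
        rw [haz, h, ← hal] at halaz
        exact lt_irrefl _ halaz
      set u := z0 - lam with hu
      have hu0 : u ≠ 0 := sub_ne_zero.2 hz0lam
      have hau : 0 < ‖u‖ := norm_pos_iff.2 hu0
      have hauu : ‖u‖ ≤ az + al := by
        rw [hu, haz, hal]
        exact norm_sub_le z0 lam
      set N := p.natDegree + k with hN
      have hQk0 : (prim lam)^[k] p ≠ 0 := iter_prim_ne_zero lam hp k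
      have hQkd : ((prim lam)^[k] p).natDegree = N := iter_prim_natDegree lam hp k
      -- the integral of Q_k along the segment vanishes
      have hseg : segInt (fun s => ((prim lam)^[k] p).eval s) lam z0 = 0 := by
        have h1 := segInt_poly ((prim lam)^[k+1] p) lam z0
        rw [iter_prim_deriv lam p k] at h1
        rw [h1, h0, iter_prim_eval_lam lam p k, sub_zero]
      have hint : ∫ t in (0:ℝ)..1, ((prim lam)^[k] p).eval (lam + (t:ℂ)*u) = 0 := by
        rw [segInt] at hseg
        rcases mul_eq_zero.1 hseg with h | h
        · rw [← hu] at h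
          exact absurd h hu0
        · rw [← hu] at h
          exact h
      set Pt := ((prim lam)^[k] p).comp (C u * X + C lam) with hPt
      have hlin_nd : (C u * X + C lam).natDegree = 1 := Polynomial.natDegree_linear hu0
      have hPt0 : Pt ≠ 0 := by
        rw [hPt]
        intro hc
        rcases Polynomial.comp_eq_zero_iff.1 hc with h | ⟨h1, h2⟩
        · exact hQk0 h
        · have := congrArg Polynomial.natDegree h2
          rw [hlin_nd, Polynomial.natDegree_C] at this
          exact one_ne_zero this
      have hPtd : Pt.natDegree ≤ N := by
        rw [hPt, Polynomial.natDegree_comp, hlin_nd, mul_one, hQkd]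
      have hPteval : ∀ t : ℝ, Pt.eval ((t:ℝ):ℂ) = ((prim lam)^[k] p).eval (lam + (t:ℂ)*u) := by
        intro t
        rw [hPt, Polynomial.eval_comp]
        congr 1
        simp only [Polynomial.eval_add, Polynomial.eval_mul, Polynomial.eval_C, Polynomial.eval_X]
        ring
      have hmomz : ∑ j ∈ Finset.range (N+1), Pt.coeff j * (((j:ℂ)+1)⁻¹) = 0 := by
        rw [← integral_eval Pt (by omega : Pt.natDegree < N+1)]
        rw [intervalIntegral.integral_congr (fun t _ => hPteval t)]
        exact hint
      have hpair0 : pairing N Pt (AA N) = 0 := by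
        rw [pairing_AA, hmomz, mul_zero]
      -- the disc bound on the roots of Pt
      set cc : ℝ := (Rk * ‖u‖ - (lam * (starRingEnd ℂ) u).re) / (‖u‖)^2
        with hcc
      have hnsqu : 0 < Complex.normSq u := Complex.normSq_pos.2 hu0
      have idu : (lam * (starRingEnd ℂ) u).re = (lam * (starRingEnd ℂ) z0).re - Complex.normSq lam := by
        rw [hu]
        simp only [map_sub, mul_sub]
        rw [Complex.sub_re, Complex.mul_conj]
        simp
      have idn : Complex.normSq u = Complex.normSq z0 - 2*(lam * (starRingEnd ℂ) z0).re
          + Complex.normSq lam := by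
        rw [hu, Complex.normSq_sub]
        have : (z0 * (starRingEnd ℂ) lam).re = (lam * (starRingEnd ℂ) z0).re := by
          have := Complex.conj_re (lam * (starRingEnd ℂ) z0)
          rw [map_mul, Complex.conj_conj] at this
          rw [← this]
          ring_nf
        rw [this]
        ring
      have hsq_az : az^2 = Complex.normSq z0 := by rw [haz, Complex.sq_norm]
      have hsq_al : al^2 = Complex.normSq lam := by rw [hal, Complex.sq_norm]
      have hsq_u : (‖u‖)^2 = Complex.normSq u := Complex.sq_norm u
      have h2RkU : 2*Rk*(‖u‖) < az^2 - al^2 := by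
        nlinarith [hauu, hazal, hRk0, hazpos, hal0, hau]
      have hcchalf : cc < 1/2 := by
        rw [hcc, div_lt_iff₀ (by positivity)]
        rw [hsq_u]
        nlinarith [h2RkU, idn, idu, hsq_az, hsq_al]
      have hPtr : ∀ b ∈ Pt.roots, b.re ≤ cc := by
        intro b hbmem
        have hb : Pt.IsRoot b := (Polynomial.mem_roots hPt0).1 hbmem
        have hx0 : ((prim lam)^[k] p).eval (u*b + lam) = 0 := by
          have h1 := hb
          rw [Polynomial.IsRoot, hPt, Polynomial.eval_comp] at h1
          simpa only [Polynomial.eval_add, Polynomial.eval_mul, Polynomial.eval_C,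
            Polynomial.eval_X] using h1
        have hxb : ‖u*b + lam‖ ≤ Rk := by
          have := ih (u*b + lam) hx0
          rw [hRk, hA]
          exact this
        set x := u*b + lam with hx
        have hbeq : b = (x - lam)/u := by
          rw [hx]
          field_simp
          ring
        have hnum : ((x - lam) * (starRingEnd ℂ) u).re
            ≤ Rk * ‖u‖ - (lam * (starRingEnd ℂ) u).re := by
          have e1 : ((x - lam) * (starRingEnd ℂ) u).re
              = (x * (starRingEnd ℂ) u).re - (lam * (starRingEnd ℂ) u).re := by
            rw [sub_mul, Complex.sub_re]
          rw [e1]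
          have e2 : (x * (starRingEnd ℂ) u).re ≤ Rk * ‖u‖ := by
            calc (x * (starRingEnd ℂ) u).re ≤ ‖x * (starRingEnd ℂ) u‖ :=
                  Complex.re_le_norm _
              _ = ‖x‖ * ‖u‖ := by rw [norm_mul, Complex.norm_conj]
              _ ≤ Rk * ‖u‖ := mul_le_mul_of_nonneg_right hxb hau.le
          linarith
        have hre : b.re = ((x - lam) * (starRingEnd ℂ) u).re / Complex.normSq u := by
          rw [hbeq, Complex.div_re, Complex.mul_re]
          simp only [Complex.conj_re, Complex.conj_im]
          ring
        rw [hre, hcc, hsq_u]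
        gcongr
      have hAAr : ∀ ζ ∈ (AA N).roots, cc < ζ.re := by
        intro ζ hζ
        rw [AA_roots_re N ζ hζ]
        linarith
      exact grace cc N Pt (AA N) hPt0 (AA_ne_zero N) hPtd (AA_natDegree N) hPtr hAAr hpair0

theorem stmt19 (n m : ℕ) (hn : 0 < n) (hm : 0 < m) (lam : ℂ) (r : ℝ) (hr : 0 < r)
    (p : Polynomial ℂ) (hdeg : p.natDegree = n)
    (hzeros : ∀ z : ℂ, p.eval z = 0 → ‖z‖ ≤ r) :
    ∀ z : ℂ, iterI n m lam p z = 0 →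
      ‖z‖ ≤ 2 ^ m * (‖lam‖ + r) - ‖lam‖ := by
  intro z hz0
  have hp : p ≠ 0 := by
    intro h
    rw [h, Polynomial.natDegree_zero] at hdeg
    omega
  have hd : 0 < p.natDegree := by omega
  obtain ⟨M, rfl⟩ : ∃ M, m = M + 1 := ⟨m - 1, by omega⟩
  rw [iterI] at hz0
  simp only [Nat.add_sub_cancel] at hz0
  rw [segInt_key p lam z M] at hz0
  have hK : ((Nat.factorial (n + (M+1)) : ℂ) /
      ((Nat.factorial (M+1-1) : ℂ) * (Nat.factorial n : ℂ))) ≠ 0 := by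
    apply div_ne_zero
    · exact_mod_cast Nat.factorial_ne_zero (n + (M+1))
    · apply mul_ne_zero
      · exact_mod_cast Nat.factorial_ne_zero (M+1-1)
      · exact_mod_cast Nat.factorial_ne_zero n
  have hMfac : ((M.factorial : ℕ) : ℂ) ≠ 0 := by
    exact_mod_cast Nat.factorial_ne_zero M
  have heval0 : (((prim lam)^[M+1]) p).eval z = 0 := by
    simp only [Nat.add_sub_cancel] at hK
    rcases mul_eq_zero.1 hz0 with h | h
    · exact absurd h hK
    · rcases mul_eq_zero.1 h with h1 | h1
      · exact absurd h1 hMfac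
      · exact h1
  exact zeros_bound p hp hd lam r hr hzeros (M+1) z heval0
end
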